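/- arXiv:2204.01877 — 6 statements merged into one kernel-verified Lean document; each statement's English description precedes it below -/
import Mathlib

section
/- Let η ∈ ℝⁿ be a positive vector and let F : ℝⁿ → ℝⁿ be continuously differentiable with μ_{∞,η⁻¹}(−DF(x)) ≤ −c for all x ∈ ℝⁿ, where c > 0. Then ‖F(x) − F(y)‖_{∞,η⁻¹} ≥ c ‖x − y‖_{∞,η⁻¹} for all x, y ∈ ℝⁿ; in particular F is injective, and any map G satisfying G(F(x)) = x for all x is Lipschitz on the range of F with constant 1/c with respect to ‖·‖_{∞,η⁻¹}. -/
open Filter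

/-- Diagonally weighted ℓ∞ norm: ‖x‖_{∞,η⁻¹} = max_i |x_i|/η_i. -/
noncomputable def wNorm {n : ℕ} (η x : Fin n → ℝ) : ℝ := ⨆ i, |x i| / η i

/-- Diagonally weighted ℓ∞ logarithmic norm of a matrix. -/
noncomputable def logNorm {n : ℕ} (η : Fin n → ℝ) (A : Matrix (Fin n) (Fin n) ℝ) : ℝ :=
  ⨆ i, (A i i + ∑ j ∈ Finset.univ.erase i, (η j / η i) * |A i j|)

/-- Jacobian matrix of `F` at `x`: (DF(x))_{ij} = ∂F_i/∂x_j. -/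
noncomputable def jac {n : ℕ} (F : (Fin n → ℝ) → (Fin n → ℝ)) (x : Fin n → ℝ) :
    Matrix (Fin n) (Fin n) ℝ :=
  fun i j => fderiv ℝ F x (Pi.single j 1) i

lemma core {n : ℕ} (η : Fin n → ℝ) (hη : ∀ i, 0 < η i)
    (F : (Fin n → ℝ) → (Fin n → ℝ)) (hF : ContDiff ℝ 1 F)
    (c : ℝ) (hc : 0 < c) (hmono : ∀ x, logNorm η (-(jac F x)) ≤ -c)
    (x y : Fin n → ℝ) (i : Fin n) (hd0 : 0 ≤ (x - y) i)
    (hmax : ∀ j, |(x - y) j| ≤ η j / η i * (x - y) i) :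
    c * (x - y) i ≤ (F x - F y) i := by
  set d := x - y with hd
  have hdiff := hF.differentiable one_ne_zero
  -- derivative of the path
  have hderiv : ∀ t : ℝ, HasDerivAt (fun t => F (y + t • d) i)
      ((fderiv ℝ F (y + t • d)) d i) t := by
    intro t
    have hp : HasDerivAt (fun t : ℝ => y + t • d) d t := by
      simpa using ((hasDerivAt_id t).smul_const d).const_add y
    have hc1 := (hdiff (y + t • d)).hasFDerivAt
    have h2 := hc1.comp_hasDerivAt t hp
    have h3 := (ContinuousLinearMap.proj (R := ℝ) (φ := fun _ : Fin n => ℝ) i).hasFDerivAt.comp_hasDerivAt t h2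
    exact h3
  -- continuity of the derivative
  have hcont : Continuous fun t : ℝ => (fderiv ℝ F (y + t • d)) d i := by
    have h1 : Continuous fun t : ℝ => y + t • d := by continuity
    have h2 := (hF.continuous_fderiv one_ne_zero).comp h1
    have h3 : Continuous fun t : ℝ => (fderiv ℝ F (y + t • d)) d :=
      (ContinuousLinearMap.apply ℝ (Fin n → ℝ) d).continuous.comp h2
    exact (continuous_apply i).comp h3
  -- FTC
  have hftc : F x i - F y i = ∫ t in (0:ℝ)..1, (fderiv ℝ F (y + t • d)) d i := by
    rw [intervalIntegral.integral_eq_sub_of_hasDerivAt (fun t _ => hderiv t)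
      (hcont.intervalIntegrable 0 1)]
    simp [hd]
  -- pointwise lower bound
  have hpt : ∀ t : ℝ, c * d i ≤ (fderiv ℝ F (y + t • d)) d i := by
    intro t
    set w := y + t • d with hw
    set A := jac F w with hA
    have hrepr : (fderiv ℝ F w) d i = ∑ j, A i j * d j := by
      have hsum : d = ∑ j, Pi.single j (d j) := (Finset.univ_sum_single d).symm
      conv_lhs => rw [hsum]
      rw [map_sum]
      rw [Finset.sum_apply]
      refine Finset.sum_congr rfl fun j _ => ?_
      have : (Pi.single j (d j) : Fin n → ℝ) = d j • (Pi.single j (1:ℝ) : Fin n → ℝ) := by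
        funext k
        by_cases hk : k = j <;> simp [Pi.single_apply, hk]
      rw [this, map_smul]
      simp [hA, jac, mul_comm]
    have hlog : c ≤ A i i - ∑ j ∈ Finset.univ.erase i, (η j / η i) * |A i j| := by
      have h1 : (-(A)) i i + ∑ j ∈ Finset.univ.erase i, (η j / η i) * |(-(A)) i j|
          ≤ logNorm η (-(A)) :=
        le_ciSup (f := fun k => (-(A)) k k + ∑ j ∈ Finset.univ.erase k, (η j / η k) * |(-(A)) k j|)
          (Set.Finite.bddAbove (Set.finite_range _)) i
      have h2 := hmono w
      simp only [Matrix.neg_apply, abs_neg] at h1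
      rw [hA]
      linarith [h1.trans h2]
    have hterm : ∀ j ∈ Finset.univ.erase i,
        -((η j / η i) * |A i j| * d i) ≤ A i j * d j := by
      intro j _
      have h1 : |A i j * d j| ≤ |A i j| * (η j / η i * d i) := by
        rw [abs_mul]
        exact mul_le_mul_of_nonneg_left (hmax j) (abs_nonneg _)
      have h2 := neg_abs_le (A i j * d j)
      nlinarith [h2, h1]
    have hsum2 : -((∑ j ∈ Finset.univ.erase i, (η j / η i) * |A i j|) * d i)
        ≤ ∑ j ∈ Finset.univ.erase i, A i j * d j := by
      have := Finset.sum_le_sum hterm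
      rw [Finset.sum_mul, ← Finset.sum_neg_distrib]
      exact this
    have hsplit : ∑ j, A i j * d j
        = A i i * d i + ∑ j ∈ Finset.univ.erase i, A i j * d j :=
      (Finset.add_sum_erase _ _ (Finset.mem_univ i)).symm
    rw [hrepr, hsplit]
    nlinarith [hlog, hsum2, hd0]
  -- integrate
  have hint : c * d i = ∫ _ in (0:ℝ)..1, c * d i := by simp
  have hmono2 : (∫ _ in (0:ℝ)..1, c * d i) ≤ ∫ t in (0:ℝ)..1, (fderiv ℝ F (y + t • d)) d i := by
    apply intervalIntegral.integral_mono_on (by norm_num)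
      intervalIntegrable_const (hcont.intervalIntegrable 0 1)
    exact fun t _ => hpt t
  have : (F x - F y) i = F x i - F y i := rfl
  rw [this, hftc]
  linarith [hmono2, hint.ge, hint.le]


/-- Strongly monotone maps are expansive; inverses are Lipschitz with constant 1/c. -/
theorem stmt_1 {n : ℕ} (η : Fin n → ℝ) (hη : ∀ i, 0 < η i)
    (F : (Fin n → ℝ) → (Fin n → ℝ)) (hF : ContDiff ℝ 1 F)
    (c : ℝ) (hc : 0 < c) (hmono : ∀ x, logNorm η (-(jac F x)) ≤ -c) :
    (∀ x y : Fin n → ℝ, wNorm η (F x - F y) ≥ c * wNorm η (x - y)) ∧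
    Function.Injective F ∧
    (∀ G : (Fin n → ℝ) → (Fin n → ℝ), (∀ x, G (F x) = x) →
      ∀ u ∈ Set.range F, ∀ v ∈ Set.range F,
        wNorm η (G u - G v) ≤ (1 / c) * wNorm η (u - v)) := by
  have part1 : ∀ x y : Fin n → ℝ, wNorm η (F x - F y) ≥ c * wNorm η (x - y) := by
    intro x y
    rcases isEmpty_or_nonempty (Fin n) with hE | hE
    · simp [wNorm, Real.iSup_of_isEmpty]
    obtain ⟨i, hi⟩ := Finite.exists_max fun j => |(x - y) j| / η j
    have hbdd : ∀ v : Fin n → ℝ, BddAbove (Set.range fun j => |v j| / η j) :=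
      fun v => Set.Finite.bddAbove (Set.finite_range _)
    have hw : wNorm η (x - y) = |(x - y) i| / η i :=
      le_antisymm (ciSup_le hi) (le_ciSup (hbdd _) i)
    have hmax : ∀ j, |(x - y) j| ≤ η j / η i * |(x - y) i| := by
      intro j
      have h := hi j
      rw [div_le_div_iff₀ (hη j) (hη i)] at h
      rw [div_mul_eq_mul_div, le_div_iff₀ (hη i)]
      linarith
    have habs : c * |(x - y) i| ≤ |(F x - F y) i| := by
      rcases le_or_gt 0 ((x - y) i) with h0 | h0
      · have hcore := core η hη F hF c hc hmono x y i h0 (by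
          intro j; rw [← abs_of_nonneg h0]; exact hmax j)
        calc c * |(x - y) i| = c * (x - y) i := by rw [abs_of_nonneg h0]
          _ ≤ (F x - F y) i := hcore
          _ ≤ |(F x - F y) i| := le_abs_self _
      · have h0' : 0 ≤ (y - x) i := by simp only [Pi.sub_apply] at *; linarith
        have hcore := core η hη F hF c hc hmono y x i h0' (by
          intro j
          have h1 : |(y - x) j| = |(x - y) j| := by
            simp only [Pi.sub_apply]; rw [abs_sub_comm]
          have h2 : (y - x) i = |(x - y) i| := by
            simp only [Pi.sub_apply] at *
            rw [abs_of_neg h0]; ring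
          rw [h1, h2]; exact hmax j)
        have h2 : (y - x) i = |(x - y) i| := by
          simp only [Pi.sub_apply] at *
          rw [abs_of_neg h0]; ring
        have h3 : (F y - F x) i = -((F x - F y) i) := by
          simp only [Pi.sub_apply]; ring
        rw [h2, h3] at hcore
        calc c * |(x - y) i| ≤ -((F x - F y) i) := hcore
          _ ≤ |(F x - F y) i| := neg_le_abs _
    calc c * wNorm η (x - y) = c * |(x - y) i| / η i := by rw [hw]; ring
      _ ≤ |(F x - F y) i| / η i := by gcongr <;> first | exact habs | exact (hη i).le
      _ ≤ wNorm η (F x - F y) := le_ciSup (hbdd _) i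
  refine ⟨part1, ?_, ?_⟩
  · intro a b hab
    have h1 := part1 a b
    rw [hab, sub_self] at h1
    have h0 : wNorm η (0 : Fin n → ℝ) = 0 := by
      simp [wNorm]
    rw [h0] at h1
    have h2 : wNorm η (a - b) ≤ 0 := by nlinarith
    have h3 : a - b = 0 := by
      funext j
      have h4 : |(a - b) j| / η j ≤ wNorm η (a - b) :=
        le_ciSup (f := fun k => |(a - b) k| / η k) (Set.Finite.bddAbove (Set.finite_range _)) j
      have h5 : 0 ≤ |(a - b) j| / η j := div_nonneg (abs_nonneg _) (hη j).le
      have h6 : |(a - b) j| / η j = 0 := le_antisymm (h4.trans h2) h5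
      have := (div_eq_zero_iff.mp h6).resolve_right (hη j).ne'
      simpa [abs_eq_zero] using this
    have := sub_eq_zero.mp h3
    exact this
  · rintro G hG u ⟨a, rfl⟩ v ⟨b, rfl⟩
    rw [hG a, hG b]
    have h := part1 a b
    calc wNorm η (a - b) = (1 / c) * (c * wNorm η (a - b)) := by field_simp
      _ ≤ (1 / c) * wNorm η (F a - F b) :=
        mul_le_mul_of_nonneg_left h (by positivity)
end

section
/- Let η ∈ ℝⁿ be a positive vector and let F : ℝⁿ → ℝⁿ be continuously differentiable with μ_{∞,η⁻¹}(−DF(x)) ≤ −c for all x ∈ ℝⁿ, where c ≥ 0. Let d > 0 be a diagonal bound for F, i.e., (DF(x))_{ii} ≤ d for all x and all i. Then for every α ∈ (0, 1/d], the map x ↦ x − αF(x) is Lipschitz with constant 1 − αc with respect to ‖·‖_{∞,η⁻¹}. -/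
open Filter

noncomputable def scaleEquiv {n : ℕ} (η : Fin n → ℝ) (hη : ∀ i, 0 < η i) :
    (Fin n → ℝ) ≃L[ℝ] (Fin n → ℝ) :=
  LinearEquiv.toContinuousLinearEquiv
  { toFun := fun x i => x i / η i
    invFun := fun x i => x i * η i
    map_add' := by intro a b; funext i; simp [add_div]
    map_smul' := by intro r a; funext i; simp [mul_div_assoc]
    left_inv := by intro a; funext i; exact div_mul_cancel₀ _ (hη i).ne'
    right_inv := by intro a; funext i; exact mul_div_cancel_right₀ _ (hη i).ne' }

@[simp] lemma scaleEquiv_apply {n : ℕ} (η : Fin n → ℝ) (hη : ∀ i, 0 < η i)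
    (x : Fin n → ℝ) (i : Fin n) : scaleEquiv η hη x i = x i / η i := rfl

@[simp] lemma scaleEquiv_symm_apply {n : ℕ} (η : Fin n → ℝ) (hη : ∀ i, 0 < η i)
    (x : Fin n → ℝ) (i : Fin n) : (scaleEquiv η hη).symm x i = x i * η i := rfl

lemma fderiv_pi_apply {n : ℕ} (F : (Fin n → ℝ) → (Fin n → ℝ)) (w u : Fin n → ℝ) (i : Fin n) :
    fderiv ℝ F w u i = ∑ j, jac F w i j * u j := by
  have hu : u = ∑ j, u j • (Pi.single j 1 : Fin n → ℝ) := by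
    funext k
    simp [Finset.sum_apply, Pi.single_apply, mul_ite]
  conv_lhs => rw [hu]
  rw [map_sum]
  simp [Finset.sum_apply, jac, mul_comm]

lemma pi_norm_eq {n : ℕ} [Nonempty (Fin n)] (x : Fin n → ℝ) : ‖x‖ = ⨆ i, ‖x i‖ := by
  apply le_antisymm
  · rw [pi_norm_le_iff_of_nonneg]
    · exact fun i => le_ciSup (f := fun i => ‖x i‖) (Set.finite_range _).bddAbove i
    · obtain ⟨i⟩ := ‹Nonempty (Fin n)›
      exact le_trans (norm_nonneg (x i))
        (le_ciSup (f := fun i => ‖x i‖) (Set.finite_range _).bddAbove i)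
  · exact ciSup_le fun i => norm_le_pi_norm x i

/-- Lipschitz constant of Id - αF for monotone F with diagonal bound d. -/
theorem stmt_2 {n : ℕ} (η : Fin n → ℝ) (hη : ∀ i, 0 < η i)
    (F : (Fin n → ℝ) → (Fin n → ℝ)) (hF : ContDiff ℝ 1 F)
    (c : ℝ) (hc : 0 ≤ c) (hmono : ∀ x, logNorm η (-(jac F x)) ≤ -c)
    (d : ℝ) (hd : 0 < d) (hdiag : ∀ x i, jac F x i i ≤ d)
    (α : ℝ) (hα : α ∈ Set.Ioc (0 : ℝ) (1 / d)) :
    ∀ x y : Fin n → ℝ,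
      wNorm η ((x - α • F x) - (y - α • F y)) ≤ (1 - α * c) * wNorm η (x - y) := by
  intro x y
  rcases isEmpty_or_nonempty (Fin n) with hemp | hne
  · simp [wNorm, Real.iSup_of_isEmpty]
  haveI := hne
  obtain ⟨hα0, hα1⟩ := hα
  have hαd : α * d ≤ 1 := (le_div_iff₀ hd).mp hα1
  set T := scaleEquiv η hη with hT
  have hdF : Differentiable ℝ F := hF.differentiable one_ne_zero
  set G : (Fin n → ℝ) → (Fin n → ℝ) := fun v => v - α • F v with hGdef
  set G' : (Fin n → ℝ) → ((Fin n → ℝ) →L[ℝ] (Fin n → ℝ)) :=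
    fun w => ContinuousLinearMap.id ℝ (Fin n → ℝ) - α • fderiv ℝ F w with hG'def
  have hG : ∀ w, HasFDerivAt G (G' w) w := fun w =>
    (hasFDerivAt_id w).sub (((hdF w).hasFDerivAt).const_smul α)
  -- row bound from monotonicity
  have hrow : ∀ (w : Fin n → ℝ) (i : Fin n),
      - jac F w i i + ∑ j ∈ Finset.univ.erase i, (η j / η i) * |jac F w i j| ≤ -c := by
    intro w i
    have h1 := hmono w
    rw [logNorm] at h1
    have h2 := le_ciSup (f := fun i => (-(jac F w)) i i +
      ∑ j ∈ Finset.univ.erase i, (η j / η i) * |(-(jac F w)) i j|)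
      (Set.finite_range _).bddAbove i
    simpa [Matrix.neg_apply, abs_neg] using h2.trans h1
  -- c ≤ d, hence 0 ≤ 1 - α c
  have hcd : c ≤ d := by
    obtain ⟨i0⟩ := hne
    have hsum0 : 0 ≤ ∑ j ∈ Finset.univ.erase i0, (η j / η i0) * |jac F x i0 j| :=
      Finset.sum_nonneg fun j _ => mul_nonneg (div_nonneg (hη j).le (hη i0).le) (abs_nonneg _)
    have h1 := hrow x i0
    have h2 := hdiag x i0
    linarith
  have hpos : 0 ≤ 1 - α * c := by nlinarith
  -- operator norm bound
  have hbound : ∀ w : Fin n → ℝ,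
      ‖(T : (Fin n → ℝ) →L[ℝ] (Fin n → ℝ)).comp
        ((G' w).comp (T.symm : (Fin n → ℝ) →L[ℝ] (Fin n → ℝ)))‖ ≤ 1 - α * c := by
    intro w
    apply ContinuousLinearMap.opNorm_le_bound _ hpos
    intro v
    rw [pi_norm_le_iff_of_nonneg (mul_nonneg hpos (norm_nonneg v))]
    intro i
    set A := jac F w with hA
    have hAii : 0 ≤ 1 - α * A i i := by nlinarith [hdiag w i]
    have hvj : ∀ j, |v j| ≤ ‖v‖ := fun j => by
      rw [← Real.norm_eq_abs]; exact norm_le_pi_norm v j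
    have happ : ((T : (Fin n → ℝ) →L[ℝ] (Fin n → ℝ)).comp
        ((G' w).comp (T.symm : (Fin n → ℝ) →L[ℝ] (Fin n → ℝ)))) v i
        = (v i * η i - α * ∑ j, A i j * (v j * η j)) / η i := by
      simp only [hG'def, hT, ContinuousLinearMap.coe_comp', Function.comp_apply,
        ContinuousLinearEquiv.coe_coe, ContinuousLinearMap.sub_apply,
        ContinuousLinearMap.id_apply, ContinuousLinearMap.smul_apply, Pi.sub_apply,
        Pi.smul_apply, smul_eq_mul, scaleEquiv_apply, scaleEquiv_symm_apply,
        fderiv_pi_apply, ← hA]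
    have key : |v i * η i - α * ∑ j, A i j * (v j * η j)| ≤
        ((1 - α * A i i) + α * ∑ j ∈ Finset.univ.erase i, (η j / η i) * |A i j|)
          * ‖v‖ * η i := by
      have hsplit : ∑ j, A i j * (v j * η j)
          = A i i * (v i * η i) + ∑ j ∈ Finset.univ.erase i, A i j * (v j * η j) :=
        (Finset.add_sum_erase _ _ (Finset.mem_univ i)).symm
      rw [hsplit]
      have e1 : v i * η i - α * (A i i * (v i * η i) +
            ∑ j ∈ Finset.univ.erase i, A i j * (v j * η j))
          = (1 - α * A i i) * (v i * η i) -
            ∑ j ∈ Finset.univ.erase i, α * (A i j * (v j * η j)) := by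
        rw [mul_add, Finset.mul_sum]; ring
      rw [e1]
      have e2 : ((1 - α * A i i) + α * ∑ j ∈ Finset.univ.erase i, (η j / η i) * |A i j|)
            * ‖v‖ * η i
          = (1 - α * A i i) * (‖v‖ * η i) +
            ∑ j ∈ Finset.univ.erase i, α * (|A i j| * (‖v‖ * η j)) := by
        rw [add_mul, add_mul, Finset.mul_sum, Finset.sum_mul, Finset.sum_mul]
        congr 1
        · ring
        · refine Finset.sum_congr rfl fun j _ => ?_
          field_simp [(hη i).ne']
      rw [e2]
      have hterm1 : |(1 - α * A i i) * (v i * η i)| ≤ (1 - α * A i i) * (‖v‖ * η i) := by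
        rw [abs_mul, abs_of_nonneg hAii, abs_mul, abs_of_pos (hη i)]
        exact mul_le_mul_of_nonneg_left
          (mul_le_mul_of_nonneg_right (hvj i) (hη i).le) hAii
      have hterm2 : |∑ j ∈ Finset.univ.erase i, α * (A i j * (v j * η j))|
          ≤ ∑ j ∈ Finset.univ.erase i, α * (|A i j| * (‖v‖ * η j)) := by
        refine (Finset.abs_sum_le_sum_abs _ _).trans (Finset.sum_le_sum fun j _ => ?_)
        rw [abs_mul, abs_of_nonneg hα0.le, abs_mul, abs_mul, abs_of_pos (hη j)]
        exact mul_le_mul_of_nonneg_left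
          (mul_le_mul_of_nonneg_left
            (mul_le_mul_of_nonneg_right (hvj j) (hη j).le) (abs_nonneg _)) hα0.le
      exact (abs_sub _ _).trans (add_le_add hterm1 hterm2)
    have hrowle : (1 - α * A i i) + α * ∑ j ∈ Finset.univ.erase i, (η j / η i) * |A i j|
        ≤ 1 - α * c := by
      have h1 := hrow w i
      nlinarith [mul_le_mul_of_nonneg_left h1 hα0.le]
    rw [Real.norm_eq_abs, happ, abs_div, abs_of_pos (hη i), div_le_iff₀ (hη i)]
    refine key.trans ?_
    exact mul_le_mul_of_nonneg_right
      (mul_le_mul_of_nonneg_right hrowle (norm_nonneg v)) (hη i).le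
  -- derivative of conjugated map
  have hH : ∀ z : Fin n → ℝ, HasFDerivAt (fun z => T (G (T.symm z)))
      ((T : (Fin n → ℝ) →L[ℝ] (Fin n → ℝ)).comp
        ((G' (T.symm z)).comp (T.symm : (Fin n → ℝ) →L[ℝ] (Fin n → ℝ)))) z := by
    intro z
    have h1 : HasFDerivAt (fun z : Fin n → ℝ => G (T.symm z))
        ((G' (T.symm z)).comp (T.symm : (Fin n → ℝ) →L[ℝ] (Fin n → ℝ))) z :=
      (hG (T.symm z)).comp z
        ((T.symm : (Fin n → ℝ) →L[ℝ] (Fin n → ℝ)).hasFDerivAt)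
    exact ((T : (Fin n → ℝ) →L[ℝ] (Fin n → ℝ)).hasFDerivAt).comp z h1
  -- mean value inequality
  have hlip : ∀ z₁ z₂ : Fin n → ℝ,
      ‖T (G (T.symm z₁)) - T (G (T.symm z₂))‖ ≤ (1 - α * c) * ‖z₁ - z₂‖ := by
    intro z₁ z₂
    exact Convex.norm_image_sub_le_of_norm_hasFDerivWithin_le
      (fun z _ => (hH z).hasFDerivWithinAt) (fun z _ => hbound (T.symm z))
      convex_univ (Set.mem_univ z₂) (Set.mem_univ z₁)
  have hwnorm : ∀ u : Fin n → ℝ, wNorm η u = ‖T u‖ := by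
    intro u
    rw [pi_norm_eq, wNorm]
    exact iSup_congr fun i => by
      rw [Real.norm_eq_abs, hT, scaleEquiv_apply, abs_div, abs_of_pos (hη i)]
  show wNorm η (G x - G y) ≤ (1 - α * c) * wNorm η (x - y)
  calc wNorm η (G x - G y) = ‖T (G x - G y)‖ := hwnorm _
    _ = ‖T (G (T.symm (T x))) - T (G (T.symm (T y)))‖ := by
        rw [map_sub, ContinuousLinearEquiv.symm_apply_apply,
          ContinuousLinearEquiv.symm_apply_apply]
    _ ≤ (1 - α * c) * ‖T x - T y‖ := hlip _ _
    _ = (1 - α * c) * wNorm η (x - y) := by rw [hwnorm, map_sub]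
end

section
/- (Lipschitz constant of the resolvent.) Let η ∈ ℝⁿ be a positive vector and let F : ℝⁿ → ℝⁿ be continuously differentiable with μ_{∞,η⁻¹}(−DF(x)) ≤ −c for all x ∈ ℝⁿ, where c ≥ 0. Let α > 0, and suppose x, y, u, v ∈ ℝⁿ satisfy x + αF(x) = u and y + αF(y) = v. Then ‖x − y‖_{∞,η⁻¹} ≤ (1/(1 + αc)) ‖u − v‖_{∞,η⁻¹}; that is, the resolvent J_{αF} = (Id + αF)^{−1} is Lipschitz with constant 1/(1 + αc). -/
open Filter

/-- Lipschitz constant of the resolvent of a (strongly) monotone operator. -/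
theorem stmt_4 {n : ℕ} (η : Fin n → ℝ) (hη : ∀ i, 0 < η i)
    (F : (Fin n → ℝ) → (Fin n → ℝ)) (hF : ContDiff ℝ 1 F)
    (c : ℝ) (hc : 0 ≤ c) (hmono : ∀ x, logNorm η (-(jac F x)) ≤ -c)
    (α : ℝ) (hα : 0 < α)
    (x y u v : Fin n → ℝ) (hx : x + α • F x = u) (hy : y + α • F y = v) :
    wNorm η (x - y) ≤ (1 / (1 + α * c)) * wNorm η (u - v) := by
  have hαc : (0:ℝ) < 1 + α * c := by nlinarith
  rcases Nat.eq_zero_or_pos n with hn | hn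
  · subst hn
    have h1 : ∀ z : Fin 0 → ℝ, wNorm η z = 0 := by
      intro z
      rw [wNorm, iSup, Set.range_eq_empty, Real.sSup_empty]
    rw [h1, h1]
    simp
  haveI : Nonempty (Fin n) := ⟨⟨0, hn⟩⟩
  set w := x - y with hw
  set M := wNorm η w with hMdef
  obtain ⟨i, hi⟩ := Finite.exists_max (fun j => |w j| / η j)
  have hbdd : BddAbove (Set.range fun j => |w j| / η j) :=
    Set.Finite.bddAbove (Set.finite_range _)
  have hM : M = |w i| / η i :=
    le_antisymm (ciSup_le hi) (le_ciSup hbdd i)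
  have hMnn : 0 ≤ M := hM ▸ div_nonneg (abs_nonneg _) (hη i).le
  set s : ℝ := if 0 ≤ w i then 1 else -1 with hs
  have hsabs : ∀ a : ℝ, s * a ≤ |a| := by
    intro a
    rcases le_or_gt 0 (w i) with h | h
    · simp [hs, h, le_abs_self]
    · simp [hs, not_le.mpr h]
      exact neg_le_abs a
  have hswi : s * w i = |w i| := by
    rcases le_or_gt 0 (w i) with h | h
    · simp [hs, h, abs_of_nonneg h]
    · simp [hs, not_le.mpr h, abs_of_neg h]
  have hwi : |w i| = η i * M := by
    rw [hM, mul_comm, div_mul_cancel₀ _ (hη i).ne']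
  have hwj : ∀ j, |w j| ≤ η j * M := by
    intro j
    have := hi j
    rw [← hM] at this
    calc |w j| = η j * (|w j| / η j) := by
          rw [mul_comm, div_mul_cancel₀ _ (hη j).ne']
    _ ≤ η j * M := mul_le_mul_of_nonneg_left this (hη j).le
  -- Jacobian expansion of the directional derivative
  have hdf : ∀ q : Fin n → ℝ, (fderiv ℝ F q) w i = ∑ j, jac F q i j * w j := by
    intro q
    have hwsum : w = ∑ j, w j • (Pi.single j 1 : Fin n → ℝ) := by
      ext k
      simp [Pi.single_apply, Finset.sum_apply]
    conv_lhs => rw [hwsum, map_sum]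
    rw [Finset.sum_apply]
    simp [jac, mul_comm]
  -- key pointwise bound
  have hbound : ∀ q : Fin n → ℝ, c * (η i * M) ≤ s * ((fderiv ℝ F q) w i) := by
    intro q
    set A := jac F q with hA
    have hterm : (-A) i i + ∑ j ∈ Finset.univ.erase i, (η j / η i) * |(-A) i j|
        ≤ -c := by
      have h1 := hmono q
      simp only [logNorm] at h1
      exact le_trans (le_ciSup (f := fun i => (-A) i i +
        ∑ j ∈ Finset.univ.erase i, (η j / η i) * |(-A) i j|)
        (Set.Finite.bddAbove (Set.finite_range _)) i) h1
    have hAneg : ∀ j, |(-A) i j| = |A i j| := by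
      intro j; simp [Matrix.neg_apply]
    rw [Matrix.neg_apply] at hterm
    simp only [hAneg] at hterm
    have hηi := hη i
    -- multiply by η i
    have hE1 : ∑ j ∈ Finset.univ.erase i, η j * |A i j| ≤ A i i * η i - c * η i := by
      have := mul_le_mul_of_nonneg_right hterm hηi.le
      rw [add_mul, Finset.sum_mul] at this
      have heq : ∀ j ∈ Finset.univ.erase i,
          (η j / η i) * |A i j| * η i = η j * |A i j| := by
        intro j _; field_simp
      rw [Finset.sum_congr rfl heq] at this
      nlinarith
    rw [hdf q, ← hA, Finset.mul_sum]
    have hsplit : ∑ j, s * (A i j * w j)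
        = s * (A i i * w i) + ∑ j ∈ Finset.univ.erase i, s * (A i j * w j) := by
      rw [← Finset.add_sum_erase _ _ (Finset.mem_univ i)]
    rw [hsplit]
    have hdiag : s * (A i i * w i) = A i i * (η i * M) := by
      rw [← hwi]; rw [← hswi]; ring
    have hoff : ∀ j ∈ Finset.univ.erase i,
        -(|A i j| * (η j * M)) ≤ s * (A i j * w j) := by
      intro j _
      have h1 : -(A i j * w j) ≤ |A i j * w j| := neg_le_abs _
      have h2 : s * (A i j * w j) ≥ -|A i j * w j| := by
        have := hsabs (-(A i j * w j))
        rw [abs_neg] at this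
        nlinarith [this]
      have h3 : |A i j * w j| ≤ |A i j| * (η j * M) := by
        rw [abs_mul]
        exact mul_le_mul_of_nonneg_left (hwj j) (abs_nonneg _)
      linarith
    have hsum : -(∑ j ∈ Finset.univ.erase i, |A i j| * (η j * M))
        ≤ ∑ j ∈ Finset.univ.erase i, s * (A i j * w j) := by
      rw [← Finset.sum_neg_distrib]
      exact Finset.sum_le_sum hoff
    have hsum2 : ∑ j ∈ Finset.univ.erase i, |A i j| * (η j * M)
        = (∑ j ∈ Finset.univ.erase i, η j * |A i j|) * M := by
      rw [Finset.sum_mul]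
      apply Finset.sum_congr rfl
      intro j _; ring
    nlinarith [hsum, hE1, hMnn, hdiag]
  -- the scalar function along the segment
  have hFdiff := (hF.differentiable one_ne_zero)
  set φ : ℝ → ℝ := fun t => s * ((y i + t * w i + α * F (y + t • w) i) / η i) with hφdef
  set φ' : ℝ → ℝ :=
    fun t => s * ((w i + α * ((fderiv ℝ F (y + t • w)) w i)) / η i) with hφ'def
  have hderiv : ∀ t : ℝ, HasDerivAt φ (φ' t) t := by
    intro t
    have h1 : HasDerivAt (fun t : ℝ => y + t • w) w t := by
      have := (hasDerivAt_id t).smul_const w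
      simpa using this.const_add y
    have h2 : HasDerivAt (fun t : ℝ => F (y + t • w)) ((fderiv ℝ F (y + t • w)) w) t :=
      (hFdiff (y + t • w)).hasFDerivAt.comp_hasDerivAt t h1
    have h3 : HasDerivAt (fun t : ℝ => F (y + t • w) i)
        ((fderiv ℝ F (y + t • w)) w i) t := hasDerivAt_pi.mp h2 i
    have h4 : HasDerivAt (fun t : ℝ => y i + t * w i) (w i) t := by
      simpa using ((hasDerivAt_id t).mul_const (w i)).const_add (y i)
    exact (((h4.add (h3.const_mul α)).div_const (η i)).const_mul s)
  have hcont : Continuous φ := by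
    rw [continuous_iff_continuousAt]
    exact fun t => (hderiv t).continuousAt
  obtain ⟨t, _, ht⟩ := exists_hasDerivAt_eq_slope φ φ' (by norm_num : (0:ℝ) < 1)
    hcont.continuousOn (fun t _ => hderiv t)
  -- compute φ 1 and φ 0
  have hφ1 : φ 1 = s * (u i / η i) := by
    have hyx : y + (1:ℝ) • w = x := by
      simp [hw]
    have hui : u i = x i + α * F x i := by
      rw [← hx]; simp
    simp only [hφdef, hyx, hui, one_mul]
    have : y i + w i = x i := by simp [hw]
    rw [this]
  have hφ0 : φ 0 = s * (v i / η i) := by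
    have hyy : y + (0:ℝ) • w = y := by simp
    have hvi : v i = y i + α * F y i := by
      rw [← hy]; simp
    simp only [hφdef, hyy, hvi, zero_mul]
    ring_nf
  -- lower bound on φ' t
  have hlow : (1 + α * c) * M ≤ φ' t := by
    have hb := hbound (y + t • w)
    have : φ' t = (s * w i + α * (s * ((fderiv ℝ F (y + t • w)) w i))) / η i := by
      rw [hφ'def]; ring
    rw [this, hswi, hwi, le_div_iff₀ (hη i)]
    nlinarith [mul_le_mul_of_nonneg_left hb hα.le]
  -- upper bound from wNorm (u - v)
  have hup : φ' t ≤ wNorm η (u - v) := by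
    rw [ht, hφ1, hφ0]
    have h1 : s * (u i / η i) - s * (v i / η i) = s * ((u i - v i) / η i) := by ring
    have h2 : s * ((u i - v i) / η i) ≤ |(u - v) i| / η i := by
      have := hsabs ((u i - v i) / η i)
      rw [abs_div, abs_of_pos (hη i)] at this
      simpa [Pi.sub_apply] using this
    have h3 : |(u - v) i| / η i ≤ wNorm η (u - v) := by
      simp only [wNorm]
      exact le_ciSup (f := fun j => |(u - v) j| / η j)
        (Set.Finite.bddAbove (Set.finite_range _)) i
    calc (s * (u i / η i) - s * (v i / η i)) / (1 - 0)
        = s * ((u i - v i) / η i) := by rw [h1]; norm_num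
      _ ≤ |(u - v) i| / η i := h2
      _ ≤ wNorm η (u - v) := h3
  have hfinal : (1 + α * c) * M ≤ wNorm η (u - v) := le_trans hlow hup
  rw [div_mul_eq_mul_div, le_div_iff₀ hαc]
  nlinarith [hfinal]
end

section
/- (Lipschitz constant of the Cayley operator.) Let η ∈ ℝⁿ be a positive vector and let F : ℝⁿ → ℝⁿ be continuously differentiable with μ_{∞,η⁻¹}(−DF(x)) ≤ −c for all x ∈ ℝⁿ, where c ≥ 0, and let d > 0 be a diagonal bound for F. Let α ∈ (0, 1/d], and suppose x, y, u, v ∈ ℝⁿ satisfy x + αF(x) = u and y + αF(y) = v. Then ‖(2x − u) − (2y − v)‖_{∞,η⁻¹} ≤ ((1 − αc)/(1 + αc)) ‖u − v‖_{∞,η⁻¹}; that is, the reflected resolvent R_{αF} = 2(Id + αF)^{−1} − Id is Lipschitz with constant (1 − αc)/(1 + αc) ≤ 1. -/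
open Filter

private lemma le_ciSup' {n : ℕ} [Nonempty (Fin n)] (f : Fin n → ℝ) (i : Fin n) :
    f i ≤ ⨆ j, f j :=
  le_ciSup ((Set.finite_range f).bddAbove) i

/-- Lipschitz constant of the Cayley (reflected resolvent) operator. -/
theorem stmt_5 {n : ℕ} (η : Fin n → ℝ) (hη : ∀ i, 0 < η i)
    (F : (Fin n → ℝ) → (Fin n → ℝ)) (hF : ContDiff ℝ 1 F)
    (c : ℝ) (hc : 0 ≤ c) (hmono : ∀ x, logNorm η (-(jac F x)) ≤ -c)
    (d : ℝ) (hd : 0 < d) (hdiag : ∀ x i, jac F x i i ≤ d)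
    (α : ℝ) (hα : α ∈ Set.Ioc (0 : ℝ) (1 / d))
    (x y u v : Fin n → ℝ) (hx : x + α • F x = u) (hy : y + α • F y = v) :
    wNorm η (((2 : ℝ) • x - u) - ((2 : ℝ) • y - v)) ≤
      ((1 - α * c) / (1 + α * c)) * wNorm η (u - v) := by
  obtain ⟨hα0, hα1⟩ := hα
  have hαd : α * d ≤ 1 := by
    rw [le_div_iff₀ hd] at hα1; linarith
  rcases Nat.eq_zero_or_pos n with hn | hn
  · subst hn
    simp [wNorm, Real.iSup_of_isEmpty]
  haveI : Nonempty (Fin n) := Fin.pos_iff_nonempty.mp hn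
  have hdiff : Differentiable ℝ F := hF.differentiable one_ne_zero
  set z : Fin n → ℝ := x - y with hzdef
  have hbdd : ∀ f : Fin n → ℝ, BddAbove (Set.range f) := fun f => (Set.finite_range f).bddAbove
  -- per-point log-norm fact
  have hJc : ∀ p i,
      c + ∑ j ∈ Finset.univ.erase i, (η j / η i) * |jac F p i j| ≤ jac F p i i := by
    intro p i
    have h0 := hmono p
    rw [logNorm] at h0
    have h1 : (-(jac F p)) i i
        + ∑ j ∈ Finset.univ.erase i, (η j / η i) * |(-(jac F p)) i j| ≤ -c :=
      le_trans (le_ciSup' (fun i => (-(jac F p)) i i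
        + ∑ j ∈ Finset.univ.erase i, (η j / η i) * |(-(jac F p)) i j|) i) h0
    simp only [Matrix.neg_apply, abs_neg] at h1
    linarith
  have hrnn : ∀ p i, (0:ℝ) ≤ ∑ j ∈ Finset.univ.erase i, (η j / η i) * |jac F p i j| := by
    intro p i
    exact Finset.sum_nonneg fun j _ =>
      mul_nonneg (div_nonneg (hη j).le (hη i).le) (abs_nonneg _)
  have hcd : c ≤ d := by
    have h1 := hJc x ⟨0, hn⟩
    have h2 := hdiag x ⟨0, hn⟩
    have h3 := hrnn x ⟨0, hn⟩
    linarith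
  have hαc : α * c ≤ 1 := le_trans (by nlinarith : α * c ≤ α * d) hαd
  have hαc0 : 0 ≤ α * c := mul_nonneg hα0.le hc
  set m := wNorm η z with hmdef
  have hzle : ∀ j, |z j| ≤ η j * m := by
    intro j
    have h1 : |z j| / η j ≤ m := by
      rw [hmdef, wNorm]; exact le_ciSup' (fun i => |z i| / η i) j
    have := (div_le_iff₀ (hη j)).mp h1
    linarith [this]
  have hm0 : 0 ≤ m := by
    rw [hmdef, wNorm]
    exact le_trans (div_nonneg (abs_nonneg _) (hη (Classical.arbitrary _)).le)
      (le_ciSup' (fun i => |z i| / η i) (Classical.arbitrary _))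
  -- representation of fderiv applied to z
  have hrep : ∀ p i, (fderiv ℝ F p) z i = ∑ j, jac F p i j * z j := by
    intro p i
    have hz' : z = ∑ j, z j • (Pi.single j 1 : Fin n → ℝ) := by
      ext k
      simp [Pi.single_apply, Finset.sum_apply, mul_ite, Finset.sum_ite_eq', eq_comm]
    conv_lhs => rw [hz']
    rw [map_sum]
    simp only [map_smul, Finset.sum_apply, Pi.smul_apply, smul_eq_mul]
    exact Finset.sum_congr rfl fun j _ => mul_comm _ _
  -- pointwise estimate (a)
  have key_a : ∀ p i, |z i - α * (fderiv ℝ F p) z i| ≤ (1 - α * c) * (η i * m) := by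
    intro p i
    set r := ∑ j ∈ Finset.univ.erase i, (η j / η i) * |jac F p i j| with hrdef
    set S := ∑ j ∈ Finset.univ.erase i, jac F p i j * z j with hSdef
    have hsplit : (fderiv ℝ F p) z i = jac F p i i * z i + S := by
      rw [hrep p i, ← Finset.add_sum_erase _ _ (Finset.mem_univ i)]
    have hSb : |S| ≤ r * (η i * m) := by
      calc |S| ≤ ∑ j ∈ Finset.univ.erase i, |jac F p i j * z j| :=
            Finset.abs_sum_le_sum_abs _ _
        _ ≤ ∑ j ∈ Finset.univ.erase i, (η j / η i) * |jac F p i j| * (η i * m) := by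
            refine Finset.sum_le_sum fun j _ => ?_
            rw [abs_mul]
            have h1 : |z j| ≤ η j * m := hzle j
            have h2 : (η j / η i) * |jac F p i j| * (η i * m) = |jac F p i j| * (η j * m) := by
              have hne : η i ≠ 0 := (hη i).ne'
              field_simp
            rw [h2]
            exact mul_le_mul_of_nonneg_left h1 (abs_nonneg _)
        _ = r * (η i * m) := by rw [hrdef, Finset.sum_mul]
    have hJ1 : α * jac F p i i ≤ 1 :=
      le_trans (mul_le_mul_of_nonneg_left (hdiag p i) hα0.le) hαd
    have heq : z i - α * (fderiv ℝ F p) z i = (1 - α * jac F p i i) * z i - α * S := by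
      rw [hsplit]; ring
    have hηm : 0 ≤ η i * m := mul_nonneg (hη i).le hm0
    have habs : |z i - α * (fderiv ℝ F p) z i|
        ≤ (1 - α * jac F p i i) * (η i * m) + α * (r * (η i * m)) := by
      rw [heq]
      calc |(1 - α * jac F p i i) * z i - α * S|
          ≤ |(1 - α * jac F p i i) * z i| + |α * S| := abs_sub _ _
        _ ≤ (1 - α * jac F p i i) * (η i * m) + α * (r * (η i * m)) := by
            rw [abs_mul, abs_mul, abs_of_nonneg (by linarith : (0:ℝ) ≤ 1 - α * jac F p i i),
              abs_of_nonneg hα0.le]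
            exact add_le_add
              (mul_le_mul_of_nonneg_left (hzle i) (by linarith))
              (mul_le_mul_of_nonneg_left hSb hα0.le)
    have hcr := hJc p i
    nlinarith [mul_nonneg hα0.le (mul_nonneg hηm (by linarith : (0:ℝ) ≤ jac F p i i - c - r))]
  -- max index
  obtain ⟨i₀, hi₀⟩ := Finite.exists_max (fun j => |z j| / η j)
  have hmi : |z i₀| = η i₀ * m := by
    have h1 : m = |z i₀| / η i₀ := by
      rw [hmdef, wNorm]
      exact le_antisymm (ciSup_le hi₀) (le_ciSup' (fun i => |z i| / η i) i₀)
    rw [h1]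
    have hne : η i₀ ≠ 0 := (hη i₀).ne'
    field_simp
  -- pointwise estimate (b)
  have key_b_pos : 0 ≤ z i₀ → ∀ p,
      (1 + α * c) * (η i₀ * m) ≤ z i₀ + α * (fderiv ℝ F p) z i₀ := by
    intro hzi p
    set r := ∑ j ∈ Finset.univ.erase i₀, (η j / η i₀) * |jac F p i₀ j| with hrdef
    set S := ∑ j ∈ Finset.univ.erase i₀, jac F p i₀ j * z j with hSdef
    have hsplit : (fderiv ℝ F p) z i₀ = jac F p i₀ i₀ * z i₀ + S := by
      rw [hrep p i₀, ← Finset.add_sum_erase _ _ (Finset.mem_univ i₀)]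
    have hSb : |S| ≤ r * (η i₀ * m) := by
      calc |S| ≤ ∑ j ∈ Finset.univ.erase i₀, |jac F p i₀ j * z j| :=
            Finset.abs_sum_le_sum_abs _ _
        _ ≤ ∑ j ∈ Finset.univ.erase i₀, (η j / η i₀) * |jac F p i₀ j| * (η i₀ * m) := by
            refine Finset.sum_le_sum fun j _ => ?_
            rw [abs_mul]
            have h2 : (η j / η i₀) * |jac F p i₀ j| * (η i₀ * m) = |jac F p i₀ j| * (η j * m) := by
              have hne : η i₀ ≠ 0 := (hη i₀).ne'
              field_simp
            rw [h2]
            exact mul_le_mul_of_nonneg_left (hzle j) (abs_nonneg _)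
        _ = r * (η i₀ * m) := by rw [hrdef, Finset.sum_mul]
    have hz0 : z i₀ = η i₀ * m := by rw [← hmi, abs_of_nonneg hzi]
    have hcr := hJc p i₀
    have hSlb : -(r * (η i₀ * m)) ≤ S := neg_le_of_abs_le hSb
    have hηm : 0 ≤ η i₀ * m := mul_nonneg (hη i₀).le hm0
    rw [hsplit, hz0]
    nlinarith [mul_nonneg hα0.le (mul_nonneg hηm
      (by linarith : (0:ℝ) ≤ jac F p i₀ i₀ - c - r))]
  have key_b_neg : z i₀ < 0 → ∀ p,
      z i₀ + α * (fderiv ℝ F p) z i₀ ≤ -((1 + α * c) * (η i₀ * m)) := by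
    intro hzi p
    set r := ∑ j ∈ Finset.univ.erase i₀, (η j / η i₀) * |jac F p i₀ j| with hrdef
    set S := ∑ j ∈ Finset.univ.erase i₀, jac F p i₀ j * z j with hSdef
    have hsplit : (fderiv ℝ F p) z i₀ = jac F p i₀ i₀ * z i₀ + S := by
      rw [hrep p i₀, ← Finset.add_sum_erase _ _ (Finset.mem_univ i₀)]
    have hSb : |S| ≤ r * (η i₀ * m) := by
      calc |S| ≤ ∑ j ∈ Finset.univ.erase i₀, |jac F p i₀ j * z j| :=
            Finset.abs_sum_le_sum_abs _ _
        _ ≤ ∑ j ∈ Finset.univ.erase i₀, (η j / η i₀) * |jac F p i₀ j| * (η i₀ * m) := by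
            refine Finset.sum_le_sum fun j _ => ?_
            rw [abs_mul]
            have h2 : (η j / η i₀) * |jac F p i₀ j| * (η i₀ * m) = |jac F p i₀ j| * (η j * m) := by
              have hne : η i₀ ≠ 0 := (hη i₀).ne'
              field_simp
            rw [h2]
            exact mul_le_mul_of_nonneg_left (hzle j) (abs_nonneg _)
        _ = r * (η i₀ * m) := by rw [hrdef, Finset.sum_mul]
    have hz0 : z i₀ = -(η i₀ * m) := by
      rw [← hmi, abs_of_neg hzi, neg_neg]
    have hcr := hJc p i₀
    have hSub : S ≤ r * (η i₀ * m) := le_of_abs_le hSb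
    have hηm : 0 ≤ η i₀ * m := mul_nonneg (hη i₀).le hm0
    rw [hsplit, hz0]
    nlinarith [mul_nonneg hα0.le (mul_nonneg hηm
      (by linarith : (0:ℝ) ≤ jac F p i₀ i₀ - c - r))]
  -- the scalar path derivatives
  have hφ : ∀ (i : Fin n) (t : ℝ),
      HasDerivAt (fun t : ℝ => F (y + t • z) i) ((fderiv ℝ F (y + t • z)) z i) t := by
    intro i t
    have hγ : HasDerivAt (fun t : ℝ => y + t • z) z t := by
      simpa using ((hasDerivAt_id t).smul_const z).const_add y
    have h1 : HasDerivAt (fun t : ℝ => F (y + t • z)) ((fderiv ℝ F (y + t • z)) z) t :=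
      (hdiff (y + t • z)).hasFDerivAt.comp_hasDerivAt t hγ
    exact (ContinuousLinearMap.proj i : ((Fin n → ℝ) →L[ℝ] ℝ)).hasFDerivAt.comp_hasDerivAt t h1
  have hy1 : y + (1:ℝ) • z = x := by
    rw [hzdef]; simp
  have hy0 : y + (0:ℝ) • z = y := by simp
  -- (a) via MVT
  have ha : ∀ i, |z i - α * (F x i - F y i)| ≤ (1 - α * c) * (η i * m) := by
    intro i
    set g : ℝ → ℝ := fun t => t * z i - α * F (y + t • z) i with hgdef
    have hg : ∀ t, HasDerivAt g (z i - α * (fderiv ℝ F (y + t • z)) z i) t := by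
      intro t
      have : HasDerivAt (fun s : ℝ => s * z i - α * F (y + s • z) i)
          (1 * z i - α * (fderiv ℝ F (y + t • z)) z i) t :=
        ((hasDerivAt_id t).mul_const (z i)).sub ((hφ i t).const_mul α)
      simpa using this
    have hgd : Differentiable ℝ g := fun t => (hg t).differentiableAt
    have hgderiv : ∀ t, deriv g t = z i - α * (fderiv ℝ F (y + t • z)) z i :=
      fun t => (hg t).deriv
    have hub : g 1 - g 0 ≤ (1 - α * c) * (η i * m) * (1 - 0) :=
      image_sub_le_mul_sub_of_deriv_le hgd
        (fun t => by rw [hgderiv t]; exact le_of_abs_le (key_a _ i)) (by norm_num)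
    have hlb : -((1 - α * c) * (η i * m)) * (1 - 0) ≤ g 1 - g 0 :=
      mul_sub_le_image_sub_of_le_deriv hgd
        (fun t => by rw [hgderiv t]; exact neg_le_of_abs_le (key_a _ i)) (by norm_num)
    have hval : g 1 - g 0 = z i - α * (F x i - F y i) := by
      rw [hgdef]
      simp only [hy1, hy0]
      ring
    rw [hval] at hub hlb
    rw [abs_le]
    constructor <;> linarith
  -- (b) via MVT
  have hb : (1 + α * c) * (η i₀ * m) ≤ |z i₀ + α * (F x i₀ - F y i₀)| := by
    set h : ℝ → ℝ := fun t => t * z i₀ + α * F (y + t • z) i₀ with hhdef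
    have hh : ∀ t, HasDerivAt h (z i₀ + α * (fderiv ℝ F (y + t • z)) z i₀) t := by
      intro t
      have : HasDerivAt (fun s : ℝ => s * z i₀ + α * F (y + s • z) i₀)
          (1 * z i₀ + α * (fderiv ℝ F (y + t • z)) z i₀) t :=
        ((hasDerivAt_id t).mul_const (z i₀)).add ((hφ i₀ t).const_mul α)
      simpa using this
    have hhd : Differentiable ℝ h := fun t => (hh t).differentiableAt
    have hhderiv : ∀ t, deriv h t = z i₀ + α * (fderiv ℝ F (y + t • z)) z i₀ :=
      fun t => (hh t).deriv
    have hval : h 1 - h 0 = z i₀ + α * (F x i₀ - F y i₀) := by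
      rw [hhdef]
      simp only [hy1, hy0]
      ring
    rcases le_or_gt 0 (z i₀) with hzi | hzi
    · have hlb : (1 + α * c) * (η i₀ * m) * (1 - 0) ≤ h 1 - h 0 :=
        mul_sub_le_image_sub_of_le_deriv hhd
          (fun t => by rw [hhderiv t]; exact key_b_pos hzi _) (by norm_num)
      rw [hval] at hlb
      calc (1 + α * c) * (η i₀ * m) = (1 + α * c) * (η i₀ * m) * (1 - 0) := by ring
        _ ≤ z i₀ + α * (F x i₀ - F y i₀) := hlb
        _ ≤ |z i₀ + α * (F x i₀ - F y i₀)| := le_abs_self _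
    · have hub : h 1 - h 0 ≤ -((1 + α * c) * (η i₀ * m)) * (1 - 0) :=
        image_sub_le_mul_sub_of_deriv_le hhd
          (fun t => by rw [hhderiv t]; exact key_b_neg hzi _) (by norm_num)
      rw [hval] at hub
      have : (1 + α * c) * (η i₀ * m) ≤ -(z i₀ + α * (F x i₀ - F y i₀)) := by linarith
      exact this.trans (neg_le_abs _)
  -- identify the vectors
  have huv : ∀ j, (u - v) j = z j + α * (F x j - F y j) := by
    intro j
    rw [← hx, ← hy, hzdef]
    simp [mul_comm]
    ring
  have hlhs : ∀ j, (((2 : ℝ) • x - u) - ((2 : ℝ) • y - v)) j = z j - α * (F x j - F y j) := by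
    intro j
    rw [← hx, ← hy, hzdef]
    simp [mul_comm]
    ring
  have h1αc : (0:ℝ) < 1 + α * c := by linarith
  -- lower bound on wNorm (u - v)
  have hW : (1 + α * c) * m ≤ wNorm η (u - v) := by
    have h1 : |(u - v) i₀| / η i₀ ≤ wNorm η (u - v) := by
      rw [wNorm]; exact le_ciSup' (fun j => |(u - v) j| / η j) i₀
    have h2 : (1 + α * c) * (η i₀ * m) ≤ |(u - v) i₀| := by rw [huv i₀]; exact hb
    have h3 : (1 + α * c) * m ≤ |(u - v) i₀| / η i₀ := by
      rw [le_div_iff₀ (hη i₀)]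
      calc (1 + α * c) * m * η i₀ = (1 + α * c) * (η i₀ * m) := by ring
        _ ≤ |(u - v) i₀| := h2
    linarith
  -- upper bound on wNorm of lhs
  have hL : wNorm η (((2 : ℝ) • x - u) - ((2 : ℝ) • y - v)) ≤ (1 - α * c) * m := by
    rw [wNorm]
    refine ciSup_le fun j => ?_
    rw [hlhs j, div_le_iff₀ (hη j)]
    calc |z j - α * (F x j - F y j)| ≤ (1 - α * c) * (η j * m) := ha j
      _ = (1 - α * c) * m * η j := by ring
  refine hL.trans ?_
  rw [div_mul_eq_mul_div, le_div_iff₀ h1αc]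
  nlinarith [mul_le_mul_of_nonneg_left hW (by linarith : (0:ℝ) ≤ 1 - α * c)]
end

section
/- (Averagedness of the resolvent.) Let η ∈ ℝⁿ be a positive vector and let F : ℝⁿ → ℝⁿ be continuously differentiable, Lipschitz with respect to ‖·‖_{∞,η⁻¹}, and satisfy μ_{∞,η⁻¹}(−DF(x)) ≤ 0 for all x ∈ ℝⁿ. Let α > 0 and let J : ℝⁿ → ℝⁿ be the resolvent, i.e., J(u) + αF(J(u)) = u for all u ∈ ℝⁿ. Then there exist θ ∈ (0,1) and a map N : ℝⁿ → ℝⁿ that is nonexpansive (1-Lipschitz) with respect to ‖·‖_{∞,η⁻¹} such that J = (1 − θ)·Id + θ·N. -/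
open Filter

lemma wNorm_nonneg {n : ℕ} (η : Fin n → ℝ) (hη : ∀ i, 0 < η i) (x : Fin n → ℝ) :
    0 ≤ wNorm η x :=
  Real.iSup_nonneg fun i => div_nonneg (abs_nonneg _) (hη i).le

lemma abs_le_wNorm {n : ℕ} (η : Fin n → ℝ) (hη : ∀ i, 0 < η i) (x : Fin n → ℝ) (i : Fin n) :
    |x i| ≤ η i * wNorm η x := by
  have h := le_ciSup (f := fun i => |x i| / η i) (Set.Finite.bddAbove (Set.finite_range _)) i
  rw [div_le_iff₀ (hη i)] at h
  simpa [wNorm, mul_comm] using h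

lemma wNorm_le {n : ℕ} (η : Fin n → ℝ) (hη : ∀ i, 0 < η i) {x : Fin n → ℝ} {C : ℝ}
    (hC : 0 ≤ C) (h : ∀ i, |x i| ≤ η i * C) : wNorm η x ≤ C := by
  rcases isEmpty_or_nonempty (Fin n) with he | hne
  · simpa [wNorm, Real.iSup_of_isEmpty] using hC
  · exact ciSup_le fun i => (div_le_iff₀ (hη i)).2 (by linarith [h i])

lemma hasDerivAt_comp_line {n : ℕ} {F : (Fin n → ℝ) → (Fin n → ℝ)} (hF : ContDiff ℝ 1 F)
    (b v : Fin n → ℝ) (i : Fin n) (t : ℝ) :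
    HasDerivAt (fun s => F (b + s • v) i) (fderiv ℝ F (b + t • v) v i) t := by
  have hdiff := hF.differentiable one_ne_zero
  have hc : HasDerivAt (fun s : ℝ => b + s • v) v t := by
    simpa using ((hasDerivAt_id t).smul_const v).const_add b
  have h1 : HasDerivAt (fun s => F (b + s • v)) (fderiv ℝ F (b + t • v) v) t :=
    (hdiff (b + t • v)).hasFDerivAt.comp_hasDerivAt t hc
  have h2 := (ContinuousLinearMap.proj (R := ℝ) (φ := fun _ : Fin n => ℝ) i
      ).hasFDerivAt.comp_hasDerivAt t h1
  exact h2

lemma wNorm_mul_single {n : ℕ} (η : Fin n → ℝ) (hη : ∀ i, 0 < η i) (i : Fin n) (c : ℝ) :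
    wNorm η (fun j => c * (Pi.single i 1 : Fin n → ℝ) j) = |c| / η i := by
  refine le_antisymm (wNorm_le η hη (div_nonneg (abs_nonneg _) (hη i).le) fun j => ?_) ?_
  · rcases eq_or_ne j i with rfl | hji
    · simp only [Pi.single_eq_same, mul_one]
      rw [mul_div_cancel₀ _ (hη j).ne']
    · simp only [Pi.single_eq_of_ne hji, mul_zero, abs_zero]
      exact mul_nonneg (hη j).le (div_nonneg (abs_nonneg _) (hη i).le)
  · have h := le_ciSup (f := fun j => |c * (Pi.single i 1 : Fin n → ℝ) j| / η j)
      (Set.Finite.bddAbove (Set.finite_range _)) i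
    simpa [wNorm, abs_mul] using h

lemma dom_sum {n : ℕ} (η : Fin n → ℝ) (hη : ∀ i, 0 < η i)
    (F : (Fin n → ℝ) → (Fin n → ℝ)) (hmono : ∀ x, logNorm η (-(jac F x)) ≤ 0)
    (x : Fin n → ℝ) (i : Fin n) :
    ∑ j ∈ Finset.univ.erase i, (η j / η i) * |jac F x i j| ≤ jac F x i i := by
  have h := le_ciSup (f := fun i => ((-(jac F x)) i i +
      ∑ j ∈ Finset.univ.erase i, (η j / η i) * |(-(jac F x)) i j|))
    (Set.Finite.bddAbove (Set.finite_range _)) i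
  have h2 := h.trans (hmono x)
  simp only [Matrix.neg_apply, abs_neg] at h2
  linarith

lemma diag_nonneg {n : ℕ} (η : Fin n → ℝ) (hη : ∀ i, 0 < η i)
    (F : (Fin n → ℝ) → (Fin n → ℝ)) (hmono : ∀ x, logNorm η (-(jac F x)) ≤ 0)
    (x : Fin n → ℝ) (i : Fin n) : 0 ≤ jac F x i i := by
  refine le_trans (Finset.sum_nonneg fun j _ => ?_) (dom_sum η hη F hmono x i)
  exact mul_nonneg (div_nonneg (hη j).le (hη i).le) (abs_nonneg _)

lemma diag_le {n : ℕ} (η : Fin n → ℝ) (hη : ∀ i, 0 < η i)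
    (F : (Fin n → ℝ) → (Fin n → ℝ)) (hF : ContDiff ℝ 1 F) {L : ℝ} (hL0 : 0 ≤ L)
    (hL : ∀ x y, wNorm η (F x - F y) ≤ L * wNorm η (x - y))
    (x : Fin n → ℝ) (i : Fin n) : |jac F x i i| ≤ L := by
  have hg : HasDerivAt (fun s : ℝ => F (x + s • (Pi.single i 1 : Fin n → ℝ)) i)
      (jac F x i i) (0:ℝ) := by
    have := hasDerivAt_comp_line hF x (Pi.single i 1 : Fin n → ℝ) i 0
    simpa [jac] using this
  have key : ∀ s : ℝ, ‖F (x + s • (Pi.single i 1 : Fin n → ℝ)) i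
      - F (x + (0:ℝ) • (Pi.single i 1 : Fin n → ℝ)) i‖ ≤ L * ‖s - 0‖ := by
    intro s
    have h1 := hL (x + s • (Pi.single i 1 : Fin n → ℝ)) x
    have h2 := abs_le_wNorm η hη (F (x + s • (Pi.single i 1 : Fin n → ℝ)) - F x) i
    have h3 : (x + s • (Pi.single i 1 : Fin n → ℝ)) - x
        = fun j => s * (Pi.single i 1 : Fin n → ℝ) j := by
      funext j; simp
    rw [h3, wNorm_mul_single η hη i s] at h1
    have h4 : |F (x + s • (Pi.single i 1 : Fin n → ℝ)) i - F x i| ≤ η i * (L * (|s| / η i)) := by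
      refine le_trans ?_ (mul_le_mul_of_nonneg_left h1 (hη i).le)
      simpa using h2
    have h5 : η i * (L * (|s| / η i)) = L * |s| := by
      field_simp
      rw [mul_assoc]; exact mul_div_cancel_left₀ _ (hη i).ne'
    rw [h5] at h4
    simpa [Real.norm_eq_abs] using h4
  simpa [Real.norm_eq_abs] using hg.le_of_lip' hL0 (Eventually.of_forall key)

lemma fderiv_apply_eq_sum {n : ℕ} {F : (Fin n → ℝ) → (Fin n → ℝ)} (hF : ContDiff ℝ 1 F)
    (x v : Fin n → ℝ) (i : Fin n) :
    fderiv ℝ F x v i = ∑ j, v j * jac F x i j := by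
  have h1 : v = ∑ j, v j • (Pi.single j 1 : Fin n → ℝ) := by
    funext k
    rw [Finset.sum_apply]
    simp [Pi.single_apply]
  conv_lhs => rw [h1]
  rw [map_sum]
  simp [jac, Finset.sum_apply]

lemma exists_m {n : ℕ} (η : Fin n → ℝ) (hη : ∀ i, 0 < η i)
    (F : (Fin n → ℝ) → (Fin n → ℝ)) (hF : ContDiff ℝ 1 F) {L : ℝ} (hL0 : 0 ≤ L)
    (hL : ∀ x y, wNorm η (F x - F y) ≤ L * wNorm η (x - y))
    (hmono : ∀ x, logNorm η (-(jac F x)) ≤ 0)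
    (a b : Fin n → ℝ) (i : Fin n) :
    ∃ m, 0 ≤ m ∧ m ≤ L ∧
      |(F a i - F b i) - m * (a i - b i)| ≤ m * (η i * wNorm η (a - b)) := by
  set d : Fin n → ℝ := a - b with hd
  set S := wNorm η d with hS
  have hS0 : 0 ≤ S := wNorm_nonneg η hη d
  set φ : ℝ → ℝ := fun t => jac F (b + t • d) i i with hφ
  set ψ : ℝ → ℝ := fun t => fderiv ℝ F (b + t • d) d i with hψ
  have hcont : Continuous fun t : ℝ => fderiv ℝ F (b + t • d) :=
    (hF.continuous_fderiv one_ne_zero).comp (by continuity)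
  have hφc : Continuous φ := (continuous_apply i).comp (hcont.clm_apply continuous_const)
  have hψc : Continuous ψ := (continuous_apply i).comp (hcont.clm_apply continuous_const)
  have hφi : IntervalIntegrable φ MeasureTheory.volume 0 1 := hφc.intervalIntegrable 0 1
  have hψi : IntervalIntegrable ψ MeasureTheory.volume 0 1 := hψc.intervalIntegrable 0 1
  refine ⟨∫ t in (0:ℝ)..1, φ t, ?_, ?_, ?_⟩
  · exact intervalIntegral.integral_nonneg (by norm_num)
      (fun t _ => diag_nonneg η hη F hmono _ i)
  · calc (∫ t in (0:ℝ)..1, φ t) ≤ ∫ t in (0:ℝ)..1, L := by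
          refine intervalIntegral.integral_mono_on (by norm_num) hφi
            (intervalIntegrable_const) (fun t _ => ?_)
          exact le_of_abs_le (diag_le η hη F hF hL0 hL _ i)
      _ = L := by simp
  · set m := ∫ t in (0:ℝ)..1, φ t with hm
    have hw : F a i - F b i = ∫ t in (0:ℝ)..1, ψ t := by
      have h := intervalIntegral.integral_eq_sub_of_hasDerivAt
        (f := fun t => F (b + t • d) i) (f' := ψ)
        (fun t _ => hasDerivAt_comp_line hF b d i t) hψi
      have e1 : b + d = a := by funext j; simp [hd]
      simpa [e1] using h.symm
    have hpt : ∀ t : ℝ, |ψ t - d i * φ t| ≤ φ t * (η i * S) := by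
      intro t
      have hexp : ψ t = ∑ j, d j * jac F (b + t • d) i j :=
        fderiv_apply_eq_sum hF (b + t • d) d i
      have hsplit : ψ t - d i * φ t
          = ∑ j ∈ Finset.univ.erase i, d j * jac F (b + t • d) i j := by
        rw [hexp, ← Finset.sum_erase_add _ _ (Finset.mem_univ i)]
        ring
      rw [hsplit]
      calc |∑ j ∈ Finset.univ.erase i, d j * jac F (b + t • d) i j|
          ≤ ∑ j ∈ Finset.univ.erase i, |d j * jac F (b + t • d) i j| :=
            Finset.abs_sum_le_sum_abs _ _
        _ ≤ ∑ j ∈ Finset.univ.erase i, (η i * S) * ((η j / η i) * |jac F (b + t • d) i j|) := by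
            refine Finset.sum_le_sum fun j _ => ?_
            rw [abs_mul]
            have h1 : |d j| ≤ η j * S := abs_le_wNorm η hη d j
            have hcc : η i * (η j / η i) = η j := by
              rw [mul_comm, div_mul_cancel₀ _ (hη i).ne']
            have h2 : (η i * S) * ((η j / η i) * |jac F (b + t • d) i j|)
                = (η j * S) * |jac F (b + t • d) i j| := by
              conv_rhs => rw [← hcc]
              ring
            rw [h2]
            exact mul_le_mul_of_nonneg_right h1 (abs_nonneg _)
        _ = (η i * S) * ∑ j ∈ Finset.univ.erase i, (η j / η i) * |jac F (b + t • d) i j| := by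
            rw [Finset.mul_sum]
        _ ≤ (η i * S) * jac F (b + t • d) i i :=
            mul_le_mul_of_nonneg_left (dom_sum η hη F hmono _ i)
              (mul_nonneg (hη i).le hS0)
        _ = φ t * (η i * S) := by rw [mul_comm]
    have hsub : F a i - F b i - m * (a i - b i)
        = ∫ t in (0:ℝ)..1, (ψ t - d i * φ t) := by
      rw [intervalIntegral.integral_sub hψi (hφi.const_mul (d i)),
        intervalIntegral.integral_const_mul, ← hw, hm]
      have : d i = a i - b i := by simp [hd]
      rw [this]
      ring
    rw [hsub]
    have habs : |∫ t in (0:ℝ)..1, (ψ t - d i * φ t)|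
        ≤ ∫ t in (0:ℝ)..1, |ψ t - d i * φ t| :=
      intervalIntegral.abs_integral_le_integral_abs (by norm_num)
    refine habs.trans ?_
    calc (∫ t in (0:ℝ)..1, |ψ t - d i * φ t|)
        ≤ ∫ t in (0:ℝ)..1, φ t * (η i * S) := by
          refine intervalIntegral.integral_mono_on (by norm_num)
            ((hψc.sub (continuous_const.mul hφc)).abs.intervalIntegrable 0 1)
            ((hφc.mul continuous_const).intervalIntegrable 0 1) (fun t _ => hpt t)
      _ = m * (η i * S) := by rw [intervalIntegral.integral_mul_const, hm]
lemma row_bound {θ c P Z E ηS : ℝ} (h1θ : 0 ≤ 1 - θ) (hc : 0 ≤ c)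
    (hcθ : (1 - θ) * c ≤ θ) (hZ : Z = c * P + E) (hE : |E| ≤ c * ηS) (hP : |P| ≤ ηS) :
    |θ * P - (1 - θ) * Z| ≤ θ * ηS := by
  rw [abs_le] at hE hP ⊢
  obtain ⟨hE1, hE2⟩ := hE; obtain ⟨hP1, hP2⟩ := hP
  have h1 : 0 ≤ (θ - (1 - θ) * c) * (ηS - P) :=
    mul_nonneg (by linarith) (by linarith)
  have h2 : 0 ≤ (θ - (1 - θ) * c) * (P + ηS) :=
    mul_nonneg (by linarith) (by linarith)
  have h3 : 0 ≤ (1 - θ) * (c * ηS - E) := mul_nonneg h1θ (by linarith)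
  have h4 : 0 ≤ (1 - θ) * (E + c * ηS) := mul_nonneg h1θ (by linarith)
  constructor <;> nlinarith [h1, h2, h3, h4]

lemma key_algebra {n : ℕ} (η : Fin n → ℝ) (hη : ∀ i, 0 < η i)
    {α L θ : ℝ} (hα : 0 < α) (hL : 0 < L) (hθ : θ = α * L / (1 + α * L))
    (d w : Fin n → ℝ)
    (hm : ∀ i, ∃ m, 0 ≤ m ∧ m ≤ L ∧ |w i - m * d i| ≤ m * (η i * wNorm η d)) :
    wNorm η (fun i => θ * d i - (1 - θ) * α * w i) ≤ θ * wNorm η (fun i => d i + α * w i) := by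
  have hden : 0 < 1 + α * L := by nlinarith
  have hθ0 : 0 < θ := by rw [hθ]; positivity
  have hθ1 : θ < 1 := by rw [hθ, div_lt_one hden]; linarith
  have h1θ : 0 < 1 - θ := by linarith
  have hrel : (1 - θ) * (α * L) = θ := by rw [hθ]; field_simp; ring
  set S := wNorm η d with hSdef
  set R := wNorm η (fun i => d i + α * w i) with hRdef
  have hS0 : 0 ≤ S := wNorm_nonneg η hη d
  have hR0 : 0 ≤ R := wNorm_nonneg η hη _
  rcases isEmpty_or_nonempty (Fin n) with he | hne
  · rw [wNorm, Real.iSup_of_isEmpty]; positivity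
  have hSR : S ≤ R := by
    obtain ⟨i₀, hi₀⟩ := exists_eq_ciSup_of_finite (f := fun i => |d i| / η i)
    have hd0 : |d i₀| = η i₀ * S := by
      rw [hSdef, wNorm, ← hi₀, mul_div_cancel₀ _ (hη i₀).ne']
    obtain ⟨m, hm0, hmL, hdom⟩ := hm i₀
    have h1 : η i₀ * S ≤ |d i₀ + α * w i₀| := by
      have hsplit : d i₀ + α * w i₀ = ((1 + α * m) * d i₀) + (α * (w i₀ - m * d i₀)) := by ring
      have h2 : |(1 + α * m) * d i₀| = (1 + α * m) * (η i₀ * S) := by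
        rw [abs_mul, abs_of_pos (by nlinarith : (0:ℝ) < 1 + α * m), hd0]
      have h3 : |α * (w i₀ - m * d i₀)| ≤ α * (m * (η i₀ * S)) := by
        rw [abs_mul, abs_of_pos hα]; exact mul_le_mul_of_nonneg_left hdom hα.le
      have h4 : |(1 + α * m) * d i₀| - |α * (w i₀ - m * d i₀)|
          ≤ |((1 + α * m) * d i₀) + (α * (w i₀ - m * d i₀))| := by
        have := abs_add_le (((1 + α * m) * d i₀) + (α * (w i₀ - m * d i₀))) (-(α * (w i₀ - m * d i₀)))
        simp only [add_neg_cancel_right, abs_neg] at this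
        linarith
      rw [hsplit]
      have hηS : 0 ≤ η i₀ * S := mul_nonneg (hη i₀).le hS0
      nlinarith [h4, h3, h2]
    have h5 : |d i₀ + α * w i₀| ≤ η i₀ * R := by
      simpa using abs_le_wNorm η hη (fun i => d i + α * w i) i₀
    have := h1.trans h5
    exact le_of_mul_le_mul_left (by linarith [this]) (hη i₀)
  apply wNorm_le η hη (by positivity)
  intro i
  obtain ⟨m, hm0, hmL, hdom⟩ := hm i
  have hcθ : (1 - θ) * (α * m) ≤ θ := by nlinarith
  have hEbound : |α * (w i - m * d i)| ≤ α * m * (η i * S) := by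
    rw [abs_mul, abs_of_pos hα, mul_assoc]
    exact mul_le_mul_of_nonneg_left hdom hα.le
  have hrow := row_bound (θ := θ) (c := α * m) (P := d i) (Z := α * w i)
      (E := α * (w i - m * d i)) (ηS := η i * S) h1θ.le (by positivity) hcθ (by ring)
      hEbound (abs_le_wNorm η hη d i)
  calc |θ * d i - (1 - θ) * α * w i| = |θ * d i - (1 - θ) * (α * w i)| := by rw [mul_assoc]
    _ ≤ θ * (η i * S) := hrow
    _ ≤ η i * (θ * R) := by nlinarith [mul_le_mul_of_nonneg_left hSR (mul_nonneg hθ0.le (hη i).le)]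

theorem stmt_6_aux {n : ℕ} (η : Fin n → ℝ) (hη : ∀ i, 0 < η i)
    (F : (Fin n → ℝ) → (Fin n → ℝ)) (hF : ContDiff ℝ 1 F)
    (L : ℝ) (hL : ∀ x y, wNorm η (F x - F y) ≤ L * wNorm η (x - y))
    (hmono : ∀ x, logNorm η (-(jac F x)) ≤ 0)
    (α : ℝ) (hα : 0 < α)
    (J : (Fin n → ℝ) → (Fin n → ℝ)) (hJ : ∀ u, J u + α • F (J u) = u) :
    ∃ θ ∈ Set.Ioo (0 : ℝ) 1, ∃ N : (Fin n → ℝ) → (Fin n → ℝ),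
      (∀ x y, wNorm η (N x - N y) ≤ wNorm η (x - y)) ∧
      ∀ u, J u = (1 - θ) • u + θ • N u := by
  set L' := max L 1 with hL'
  have hL'1 : (1:ℝ) ≤ L' := le_max_right _ _
  have hL'0 : (0:ℝ) < L' := lt_of_lt_of_le one_pos hL'1
  have hL2 : ∀ x y, wNorm η (F x - F y) ≤ L' * wNorm η (x - y) := fun x y =>
    (hL x y).trans (mul_le_mul_of_nonneg_right (le_max_left _ _) (wNorm_nonneg η hη _))
  set θ := α * L' / (1 + α * L') with hθ
  have hden : (0:ℝ) < 1 + α * L' := by nlinarith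
  have hθ0 : 0 < θ := by rw [hθ]; positivity
  have hθ1 : θ < 1 := by rw [hθ, div_lt_one hden]; linarith
  refine ⟨θ, ⟨hθ0, hθ1⟩, fun u => θ⁻¹ • (J u - (1 - θ) • u), ?_, ?_⟩
  · intro u v
    set d : Fin n → ℝ := J u - J v with hd
    set w : Fin n → ℝ := F (J u) - F (J v) with hw
    have hm : ∀ i, ∃ m, 0 ≤ m ∧ m ≤ L' ∧ |w i - m * d i| ≤ m * (η i * wNorm η d) := by
      intro i
      obtain ⟨m, h1, h2, h3⟩ := exists_m η hη F hF hL'0.le hL2 hmono (J u) (J v) i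
      exact ⟨m, h1, h2, h3⟩
    have hkey := key_algebra η hη hα hL'0 hθ d w hm
    have huv : (fun i => d i + α * w i) = u - v := by
      funext j
      have h1 := congrFun (hJ u) j
      have h2 := congrFun (hJ v) j
      simp only [Pi.add_apply, Pi.smul_apply, smul_eq_mul] at h1 h2
      simp only [hd, hw, Pi.sub_apply]
      linarith
    rw [huv] at hkey
    refine wNorm_le η hη (wNorm_nonneg η hη _) fun j => ?_
    have h4 : |θ * d j - (1 - θ) * α * w j| ≤ η j * (θ * wNorm η (u - v)) :=
      (abs_le_wNorm η hη (fun i => θ * d i - (1 - θ) * α * w i) j).trans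
        (mul_le_mul_of_nonneg_left hkey (hη j).le)
    have h6 : u j - v j = d j + α * w j := by
      have := congrFun huv j
      simpa using this.symm
    have h7 : J u j - J v j = d j := by simp [hd]
    have h5 : (θ⁻¹ • (J u - (1 - θ) • u) - θ⁻¹ • (J v - (1 - θ) • v)) j
        = θ⁻¹ * (θ * d j - (1 - θ) * α * w j) := by
      simp only [Pi.sub_apply, Pi.smul_apply, smul_eq_mul]
      linear_combination θ⁻¹ * h7 - θ⁻¹ * (1 - θ) * h6
    calc |(θ⁻¹ • (J u - (1 - θ) • u) - θ⁻¹ • (J v - (1 - θ) • v)) j|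
        = θ⁻¹ * |θ * d j - (1 - θ) * α * w j| := by
          rw [h5, abs_mul, abs_of_pos (inv_pos.2 hθ0)]
      _ ≤ θ⁻¹ * (η j * (θ * wNorm η (u - v))) :=
          mul_le_mul_of_nonneg_left h4 (inv_pos.2 hθ0).le
      _ = η j * wNorm η (u - v) := by
          field_simp
  · intro u
    rw [smul_smul, mul_inv_cancel₀ hθ0.ne', one_smul]
    abel


/-- Averagedness of the resolvent of a Lipschitz monotone operator. -/
theorem stmt_6 {n : ℕ} (η : Fin n → ℝ) (hη : ∀ i, 0 < η i)
    (F : (Fin n → ℝ) → (Fin n → ℝ)) (hF : ContDiff ℝ 1 F)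
    (L : ℝ) (hL : ∀ x y, wNorm η (F x - F y) ≤ L * wNorm η (x - y))
    (hmono : ∀ x, logNorm η (-(jac F x)) ≤ 0)
    (α : ℝ) (hα : 0 < α)
    (J : (Fin n → ℝ) → (Fin n → ℝ)) (hJ : ∀ u, J u + α • F (J u) = u) :
    ∃ θ ∈ Set.Ioo (0 : ℝ) 1, ∃ N : (Fin n → ℝ) → (Fin n → ℝ),
      (∀ x y, wNorm η (N x - N y) ≤ wNorm η (x - y)) ∧
      ∀ u, J u = (1 - θ) • u + θ • N u :=
  stmt_6_aux η hη F hF L hL hmono α hα J hJ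
end

section
/- (Forward step method, weakly monotone case.) Let η ∈ ℝⁿ be a positive vector and let F : ℝⁿ → ℝⁿ be continuously differentiable, Lipschitz with respect to ‖·‖_{∞,η⁻¹}, satisfy μ_{∞,η⁻¹}(−DF(x)) ≤ 0 for all x ∈ ℝⁿ, and let d > 0 be a diagonal bound for F. Suppose Zero(F) ≠ ∅. Then for every α ∈ (0, 1/d), the sequence defined by x_{k+1} = x_k − αF(x_k) (from any initial point x_0) converges to some element of Zero(F). -/
open Filter

section basics
variable {n : ℕ} {η : Fin n → ℝ}

lemma wnorm_nonneg (hη : ∀ i, 0 < η i) (v : Fin n → ℝ) : 0 ≤ wNorm η v :=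
  Real.iSup_nonneg fun i => div_nonneg (abs_nonneg _) (hη i).le

lemma abs_le_wnorm (hη : ∀ i, 0 < η i) (v : Fin n → ℝ) (i : Fin n) :
    |v i| ≤ η i * wNorm η v := by
  have h : |v i| / η i ≤ wNorm η v :=
    le_ciSup (f := fun i => |v i| / η i) (Set.Finite.bddAbove (Set.finite_range _)) i
  rw [div_le_iff₀ (hη i)] at h
  linarith [mul_comm (η i) (wNorm η v)]

lemma wnorm_le (hη : ∀ i, 0 < η i) {v : Fin n → ℝ} {M : ℝ} (hM : 0 ≤ M)
    (h : ∀ i, |v i| ≤ η i * M) : wNorm η v ≤ M := by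
  refine Real.iSup_le (fun i => ?_) hM
  rw [div_le_iff₀ (hη i)]
  linarith [h i, mul_comm (η i) M]

lemma wnorm_add_le (hη : ∀ i, 0 < η i) (u v : Fin n → ℝ) :
    wNorm η (u + v) ≤ wNorm η u + wNorm η v := by
  have h0 : (0:ℝ) ≤ wNorm η u + wNorm η v :=
    add_nonneg (wnorm_nonneg hη u) (wnorm_nonneg hη v)
  refine wnorm_le hη h0 fun i => ?_
  have h1 := abs_le_wnorm hη u i; have h2 := abs_le_wnorm hη v i
  calc |(u+v) i| ≤ |u i| + |v i| := by simpa using abs_add_le (u i) (v i)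
  _ ≤ η i * (wNorm η u + wNorm η v) := by rw [mul_add]; exact add_le_add h1 h2

lemma wnorm_smul (hη : ∀ i, 0 < η i) (c : ℝ) (v : Fin n → ℝ) :
    wNorm η (c • v) = |c| * wNorm η v := by
  have key : ∀ (c : ℝ) (v : Fin n → ℝ), wNorm η (c • v) ≤ |c| * wNorm η v := by
    intro c v
    have h0 : (0:ℝ) ≤ |c| * wNorm η v :=
      mul_nonneg (abs_nonneg c) (wnorm_nonneg hη v)
    refine wnorm_le hη h0 fun i => ?_
    calc |(c • v) i| = |c| * |v i| := by simp [abs_mul]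
    _ ≤ |c| * (η i * wNorm η v) :=
        mul_le_mul_of_nonneg_left (abs_le_wnorm hη v i) (abs_nonneg c)
    _ = η i * (|c| * wNorm η v) := by ring
  rcases eq_or_ne c 0 with rfl | hc
  · simp [wNorm]
  · refine le_antisymm (key c v) ?_
    have h2 := key c⁻¹ (c • v)
    rw [inv_smul_smul₀ hc, abs_inv] at h2
    have hc' : 0 < |c| := abs_pos.2 hc
    calc |c| * wNorm η v ≤ |c| * (|c|⁻¹ * wNorm η (c • v)) := by
          exact mul_le_mul_of_nonneg_left h2 (abs_nonneg c)
    _ = wNorm η (c • v) := by field_simp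

lemma wnorm_sub_le (hη : ∀ i, 0 < η i) (u v w : Fin n → ℝ) :
    wNorm η (u - w) ≤ wNorm η (u - v) + wNorm η (v - w) := by
  have h : u - w = (u - v) + (v - w) := by abel
  rw [h]; exact wnorm_add_le hη _ _

lemma wnorm_neg (hη : ∀ i, 0 < η i) (v : Fin n → ℝ) : wNorm η (-v) = wNorm η v := by
  have := wnorm_smul hη (-1) v; simpa using this
end basics

lemma fderiv_apply_eq {n : ℕ} {F : (Fin n → ℝ) → (Fin n → ℝ)}
    (u v : Fin n → ℝ) (i : Fin n) :
    fderiv ℝ F u v i = ∑ j, jac F u i j * v j := by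
  have hv : v = ∑ j, v j • (Pi.single j (1:ℝ) : Fin n → ℝ) := by
    ext k
    simp [Finset.sum_apply, Pi.single_apply]
  conv_lhs => rw [hv]
  rw [map_sum]
  simp [Finset.sum_apply, jac, mul_comm]

section rowest
variable {n : ℕ} {η : Fin n → ℝ}

lemma row_est {A : Matrix (Fin n) (Fin n) ℝ} (hη : ∀ i, 0 < η i)
    (hm : logNorm η (-A) ≤ 0) (i : Fin n) :
    ∑ j ∈ Finset.univ.erase i, η j * |A i j| ≤ η i * A i i := by
  have h1 : (-A) i i + ∑ j ∈ Finset.univ.erase i, (η j / η i) * |(-A) i j|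
      ≤ logNorm η (-A) := by
    exact le_ciSup (f := fun i => (-A) i i + ∑ j ∈ Finset.univ.erase i, (η j / η i) * |(-A) i j|) (Set.Finite.bddAbove (Set.finite_range _)) i
  have h2 : -(A i i) + ∑ j ∈ Finset.univ.erase i, (η j / η i) * |A i j| ≤ 0 := by
    refine le_trans (le_of_eq ?_) (h1.trans hm)
    simp [Matrix.neg_apply]
  have h3 : ∑ j ∈ Finset.univ.erase i, (η j / η i) * |A i j| ≤ A i i := by linarith
  have h4 := mul_le_mul_of_nonneg_left h3 (hη i).le
  calc ∑ j ∈ Finset.univ.erase i, η j * |A i j|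
      = η i * ∑ j ∈ Finset.univ.erase i, (η j / η i) * |A i j| := by
        rw [Finset.mul_sum]
        refine Finset.sum_congr rfl fun j _ => ?_
        rw [← mul_assoc, mul_comm (η i) (η j / η i), div_mul_cancel₀ _ (hη i).ne']
  _ ≤ η i * A i i := h4

lemma coord_est {A : Matrix (Fin n) (Fin n) ℝ} {v : Fin n → ℝ} {N d : ℝ}
    (hη : ∀ i, 0 < η i) (hd : 0 < d) (hN : 0 ≤ N) (i : Fin n)
    (hrow : ∑ j ∈ Finset.univ.erase i, η j * |A i j| ≤ η i * A i i)
    (hAd : A i i ≤ d) (hv : ∀ j, |v j| ≤ η j * N) :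
    |v i - d⁻¹ * ∑ j, A i j * v j| ≤ η i * N := by
  have hsplit : ∑ j, A i j * v j
      = A i i * v i + ∑ j ∈ Finset.univ.erase i, A i j * v j := by
    rw [← Finset.add_sum_erase _ _ (Finset.mem_univ i)]
  have hco : (0:ℝ) ≤ 1 - d⁻¹ * A i i := by
    have : d⁻¹ * A i i ≤ d⁻¹ * d := mul_le_mul_of_nonneg_left hAd (inv_nonneg.2 hd.le)
    rw [inv_mul_cancel₀ hd.ne'] at this
    linarith
  have hsum : |∑ j ∈ Finset.univ.erase i, A i j * v j|
      ≤ (η i * A i i) * N := by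
    calc |∑ j ∈ Finset.univ.erase i, A i j * v j|
        ≤ ∑ j ∈ Finset.univ.erase i, |A i j * v j| := Finset.abs_sum_le_sum_abs _ _
    _ ≤ ∑ j ∈ Finset.univ.erase i, (η j * |A i j|) * N := by
        refine Finset.sum_le_sum fun j _ => ?_
        rw [abs_mul]
        calc |A i j| * |v j| ≤ |A i j| * (η j * N) :=
              mul_le_mul_of_nonneg_left (hv j) (abs_nonneg _)
        _ = (η j * |A i j|) * N := by ring
    _ = (∑ j ∈ Finset.univ.erase i, η j * |A i j|) * N := by rw [Finset.sum_mul]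
    _ ≤ (η i * A i i) * N := mul_le_mul_of_nonneg_right hrow hN
  have key : v i - d⁻¹ * ∑ j, A i j * v j
      = (1 - d⁻¹ * A i i) * v i - d⁻¹ * ∑ j ∈ Finset.univ.erase i, A i j * v j := by
    rw [hsplit]; ring
  rw [key]
  have h1 : |(1 - d⁻¹ * A i i) * v i| ≤ (1 - d⁻¹ * A i i) * (η i * N) := by
    rw [abs_mul, abs_of_nonneg hco]
    exact mul_le_mul_of_nonneg_left (hv i) hco
  have h2 : |d⁻¹ * ∑ j ∈ Finset.univ.erase i, A i j * v j|
      ≤ d⁻¹ * ((η i * A i i) * N) := by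
    rw [abs_mul, abs_of_nonneg (inv_nonneg.2 hd.le)]
    exact mul_le_mul_of_nonneg_left hsum (inv_nonneg.2 hd.le)
  calc |(1 - d⁻¹ * A i i) * v i - d⁻¹ * ∑ j ∈ Finset.univ.erase i, A i j * v j|
      ≤ |(1 - d⁻¹ * A i i) * v i| + |d⁻¹ * ∑ j ∈ Finset.univ.erase i, A i j * v j| :=
        abs_sub _ _
  _ ≤ (1 - d⁻¹ * A i i) * (η i * N) + d⁻¹ * ((η i * A i i) * N) := add_le_add h1 h2
  _ = η i * N := by ring
end rowest

section nonexp
variable {n : ℕ} {η : Fin n → ℝ} {F : (Fin n → ℝ) → (Fin n → ℝ)} {d : ℝ}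

lemma H_nonexp (hη : ∀ i, 0 < η i) (hF : ContDiff ℝ 1 F)
    (hmono : ∀ x, logNorm η (-(jac F x)) ≤ 0) (hd : 0 < d)
    (hdiag : ∀ x i, jac F x i i ≤ d) (x y : Fin n → ℝ) :
    wNorm η ((x - d⁻¹ • F x) - (y - d⁻¹ • F y)) ≤ wNorm η (x - y) := by
  set v : Fin n → ℝ := x - y with hv
  set N : ℝ := wNorm η v with hN
  have hN0 : 0 ≤ N := wnorm_nonneg hη v
  have hFd : Differentiable ℝ F := hF.differentiable one_ne_zero
  set γ : ℝ → (Fin n → ℝ) := fun t => y + t • v with hγdef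
  have hγ : ∀ t, HasDerivAt γ v t := by
    intro t
    have h := ((hasDerivAt_id t).smul_const v).const_add y
    rw [one_smul] at h; exact h
  have hγ1 : γ 1 = x := by ext j; simp [hγdef, hv]
  have hγ0 : γ 0 = y := by ext j; simp [hγdef]
  refine wnorm_le hη hN0 fun i => ?_
  set φ : ℝ → ℝ := fun t => γ t i - d⁻¹ * F (γ t) i with hφdef
  have hφ : ∀ t, HasDerivAt φ
      (v i - d⁻¹ * fderiv ℝ F (γ t) v i) t := by
    intro t
    have hFγ : HasDerivAt (fun t => F (γ t)) (fderiv ℝ F (γ t) v) t :=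
      (hFd (γ t)).hasFDerivAt.comp_hasDerivAt t (hγ t)
    have hFγi : HasDerivAt (fun t => F (γ t) i) (fderiv ℝ F (γ t) v i) t := by
      exact
        (ContinuousLinearMap.proj (R := ℝ) (φ := fun _ : Fin n => ℝ) i).hasFDerivAt.comp_hasDerivAt t hFγ
    have hγi : HasDerivAt (fun t => γ t i) (v i) t := by
      exact
        (ContinuousLinearMap.proj (R := ℝ) (φ := fun _ : Fin n => ℝ) i).hasFDerivAt.comp_hasDerivAt t (hγ t)
    exact hγi.sub (hFγi.const_mul d⁻¹)
  have bound : ∀ t ∈ Set.Ico (0:ℝ) 1,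
      ‖v i - d⁻¹ * fderiv ℝ F (γ t) v i‖ ≤ η i * N := by
    intro t _
    rw [Real.norm_eq_abs, fderiv_apply_eq]
    exact coord_est hη hd hN0 i (row_est hη (hmono (γ t)) i) (hdiag (γ t) i)
      (fun j => abs_le_wnorm hη v j)
  have mvt := norm_image_sub_le_of_norm_deriv_le_segment'
    (f := φ) (f' := fun t => v i - d⁻¹ * fderiv ℝ F (γ t) v i)
    (a := 0) (b := 1) (C := η i * N)
    (fun t _ => (hφ t).hasDerivWithinAt) bound 1 ⟨zero_le_one, le_refl _⟩
  rw [Real.norm_eq_abs] at mvt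
  have : |φ 1 - φ 0| ≤ η i * N := by simpa using mvt
  have heq : ((x - d⁻¹ • F x) - (y - d⁻¹ • F y)) i = φ 1 - φ 0 := by
    simp only [hφdef, hγ1, hγ0, Pi.sub_apply, Pi.smul_apply, smul_eq_mul]
  rw [heq]
  exact this
end nonexp

section ishikawa
variable {n : ℕ} {η : Fin n → ℝ}

lemma ishikawa_basic (hη : ∀ i, 0 < η i) (T : (Fin n → ℝ) → (Fin n → ℝ))
    (hT : ∀ a b, wNorm η (T a - T b) ≤ wNorm η (a - b))
    {lam : ℝ} (h0 : 0 < lam) (h1 : lam < 1)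
    (x : ℕ → Fin n → ℝ) (hx : ∀ k, x (k+1) = (1-lam) • x k + lam • T (x k)) :
    (∀ k, x (k+1) - x k = lam • (T (x k) - x k))
    ∧ (∀ k, wNorm η (T (x (k+1)) - x (k+1)) ≤ wNorm η (T (x k) - x k)) := by
  have step : ∀ k, x (k+1) - x k = lam • (T (x k) - x k) := by
    intro k
    rw [hx k]
    ext j
    simp only [Pi.add_apply, Pi.sub_apply, Pi.smul_apply, smul_eq_mul]
    ring
  refine ⟨step, fun k => ?_⟩
  have hdec : T (x (k+1)) - x (k+1)
      = (T (x (k+1)) - T (x k)) + (1 - lam) • (T (x k) - x k) := by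
    rw [hx k]
    ext j
    simp only [Pi.add_apply, Pi.sub_apply, Pi.smul_apply, smul_eq_mul]
    ring
  calc wNorm η (T (x (k+1)) - x (k+1))
      ≤ wNorm η (T (x (k+1)) - T (x k)) + wNorm η ((1-lam) • (T (x k) - x k)) := by
        rw [hdec]; exact wnorm_add_le hη _ _
  _ ≤ wNorm η (x (k+1) - x k) + (1-lam) * wNorm η (T (x k) - x k) := by
        rw [wnorm_smul hη, abs_of_nonneg (by linarith : (0:ℝ) ≤ 1 - lam)]
        exact add_le_add_left (hT _ _) _
  _ = lam * wNorm η (T (x k) - x k) + (1-lam) * wNorm η (T (x k) - x k) := by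
        rw [step k, wnorm_smul hη, abs_of_nonneg h0.le]
  _ = wNorm η (T (x k) - x k) := by ring
end ishikawa

section ishikawa2
variable {n : ℕ} {η : Fin n → ℝ}

lemma wnorm_zero (hη : ∀ i, 0 < η i) : wNorm η (0 : Fin n → ℝ) = 0 :=
  le_antisymm (wnorm_le hη le_rfl fun i => by simp) (wnorm_nonneg hη _)

lemma ishikawa_ineq (hη : ∀ i, 0 < η i) (T : (Fin n → ℝ) → (Fin n → ℝ))
    (hT : ∀ a b, wNorm η (T a - T b) ≤ wNorm η (a - b))
    {lam : ℝ} (h0 : 0 < lam) (h1 : lam < 1)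
    (x : ℕ → Fin n → ℝ) (hx : ∀ k, x (k+1) = (1-lam) • x k + lam • T (x k)) :
    ∀ m i, ((1-lam)⁻¹)^m * (wNorm η (T (x (i+m)) - x (i+m)) - wNorm η (T (x i) - x i))
      + (1 + m*lam) * wNorm η (T (x i) - x i) ≤ wNorm η (T (x (i+m)) - x i) := by
  obtain ⟨step, dec⟩ := ishikawa_basic hη T hT h0 h1 x hx
  set D : ℕ → ℝ := fun k => wNorm η (T (x k) - x k) with hD
  have h1l : (0:ℝ) < 1 - lam := by linarith
  set q : ℝ := (1-lam)⁻¹ with hq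
  have hq0 : 0 < q := inv_pos.2 h1l
  have hq1 : (1-lam) * q = 1 := mul_inv_cancel₀ h1l.ne'
  have Dmono : ∀ j k, j ≤ k → D k ≤ D j := by
    intro j k hjk
    exact antitone_nat_of_succ_le dec hjk
  have dist_bound : ∀ i m, wNorm η (x (i+m) - x i) ≤ lam * m * D i := by
    intro i m
    induction m with
    | zero =>
      rw [Nat.add_zero, sub_self, wnorm_zero hη]
      simp
    | succ m ih =>
      have hsplit : x (i+(m+1)) - x i = (x ((i+m)+1) - x (i+m)) + (x (i+m) - x i) := by
        have : i+(m+1) = (i+m)+1 := by omega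
        rw [this]; abel
      calc wNorm η (x (i+(m+1)) - x i)
          ≤ wNorm η (x ((i+m)+1) - x (i+m)) + wNorm η (x (i+m) - x i) := by
            rw [hsplit]; exact wnorm_add_le hη _ _
      _ ≤ lam * D (i+m) + lam * m * D i := by
            rw [step (i+m), wnorm_smul hη, abs_of_nonneg h0.le]
            exact add_le_add_right ih _
      _ ≤ lam * D i + lam * m * D i := by
            have := Dmono i (i+m) (Nat.le_add_right _ _)
            nlinarith
      _ = lam * (m+1) * D i := by ring
      _ = lam * ((m+1:ℕ):ℝ) * D i := by push_cast; ring
  have bern : ∀ m : ℕ, (1:ℝ) + m * lam ≤ q^m := by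
    intro m
    have ha : (0:ℝ) ≤ lam / (1-lam) := div_nonneg h0.le h1l.le
    have h2 : (1:ℝ) + lam/(1-lam) = q := by rw [hq]; field_simp; ring
    have h3 := one_add_mul_le_pow (by linarith : (-2:ℝ) ≤ lam/(1-lam)) m
    rw [h2] at h3
    refine le_trans ?_ h3
    have : lam ≤ lam/(1-lam) := by
      rw [le_div_iff₀ h1l]; nlinarith
    nlinarith [Nat.cast_nonneg (α := ℝ) m]
  intro m
  induction m with
  | zero => intro i; rw [Nat.add_zero]; norm_num
  | succ m ih =>
    intro i
    set a := D i with ha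
    set b := D (i+1) with hb
    set c := D (i+(m+1)) with hc
    have hba : b ≤ a := Dmono i (i+1) (by omega)
    -- vector identity and triangle
    have hidvec : q • (T (x (i+(m+1))) - x (i+1))
        = (T (x (i+(m+1))) - x i) + (q*lam) • (T (x (i+(m+1))) - T (x i)) := by
      rw [hx i]
      ext j
      simp only [Pi.add_apply, Pi.sub_apply, Pi.smul_apply, smul_eq_mul]
      rw [hq]
      field_simp
      ring
    have hBC : q * wNorm η (T (x (i+(m+1))) - x (i+1))
        ≤ wNorm η (T (x (i+(m+1))) - x i)
          + (q*lam) * wNorm η (T (x (i+(m+1))) - T (x i)) := by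
      calc q * wNorm η (T (x (i+(m+1))) - x (i+1))
          = wNorm η (q • (T (x (i+(m+1))) - x (i+1))) := by
            rw [wnorm_smul hη, abs_of_nonneg hq0.le]
      _ = wNorm η ((T (x (i+(m+1))) - x i) + (q*lam) • (T (x (i+(m+1))) - T (x i))) := by
            rw [hidvec]
      _ ≤ wNorm η (T (x (i+(m+1))) - x i) + wNorm η ((q*lam) • (T (x (i+(m+1))) - T (x i))) :=
            wnorm_add_le hη _ _
      _ = wNorm η (T (x (i+(m+1))) - x i) + (q*lam) * wNorm η (T (x (i+(m+1))) - T (x i)) := by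
            rw [wnorm_smul hη, abs_of_nonneg (mul_nonneg hq0.le h0.le)]
    have hC : wNorm η (T (x (i+(m+1))) - T (x i)) ≤ lam * (m+1) * a := by
      calc wNorm η (T (x (i+(m+1))) - T (x i)) ≤ wNorm η (x (i+(m+1)) - x i) := hT _ _
      _ ≤ lam * (m+1) * a := by exact_mod_cast dist_bound i (m+1)
    have hB : q^m * (c - b) + (1 + m*lam) * b ≤ wNorm η (T (x (i+(m+1))) - x (i+1)) := by
      have h' := ih (i+1)
      have hee : i+1+m = i+(m+1) := by omega
      rw [hee] at h'
      exact h'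
    have hDnn : 0 ≤ c := wnorm_nonneg hη _
    have key : 0 ≤ (a - b) * (q^m - (1 + m*lam)) :=
      mul_nonneg (by linarith) (by linarith [bern m])
    -- combine
    have hA : q * (q^m * (c - b) + (1 + m*lam) * b) - (q*lam) * (lam * (m+1) * a)
        ≤ wNorm η (T (x (i+(m+1))) - x i) := by
      have hqB := mul_le_mul_of_nonneg_left hB hq0.le
      have hqC := mul_le_mul_of_nonneg_left hC (mul_nonneg hq0.le h0.le)
      linarith
    refine le_trans ?_ hA
    -- final algebra: multiply through by (1 - lam)
    rw [← mul_le_mul_iff_right₀ h1l]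
    have e1 : (1-lam) * q^(m+1) = q^m := by
      rw [pow_succ, ← mul_assoc, mul_comm (1-lam) (q^m), mul_assoc, hq]
      field_simp
    have lhs_eq : (1-lam) * (q^(m+1) * (c - a) + (1 + (↑(m+1):ℝ)*lam) * a)
        = q^m * (c - a) + (1-lam) * (1 + ((m:ℝ)+1)*lam) * a := by
      push_cast
      rw [← e1]; ring
    have rhs_eq : (1-lam) * (q * (q^m * (c - b) + (1 + m*lam) * b) - (q*lam) * (lam * (m+1) * a))
        = q^m * (c - b) + (1 + (m:ℝ)*lam) * b - lam^2 * ((m:ℝ)+1) * a := by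
      have : (1-lam) * q = 1 := hq1
      push_cast
      calc (1-lam) * (q * (q^m * (c - b) + (1 + (m:ℝ)*lam) * b) - (q*lam) * (lam * ((m:ℝ)+1) * a))
          = ((1-lam)*q) * (q^m * (c - b) + (1 + (m:ℝ)*lam) * b)
            - ((1-lam)*q) * (lam * (lam * ((m:ℝ)+1) * a)) := by ring
      _ = q^m * (c - b) + (1 + (m:ℝ)*lam) * b - lam^2 * ((m:ℝ)+1) * a := by
            rw [hq1]; ring
    push_cast
    push_cast at lhs_eq rhs_eq
    rw [lhs_eq, rhs_eq]
    nlinarith [key]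
end ishikawa2

section conv
variable {n : ℕ} {η : Fin n → ℝ}

lemma antitone_to_zero {f : ℕ → ℝ} (hnn : ∀ k, 0 ≤ f k)
    (hmono : ∀ j k, j ≤ k → f k ≤ f j) (hsmall : ∀ ε > 0, ∃ k, f k < ε) :
    Filter.Tendsto f Filter.atTop (nhds 0) := by
  rw [Metric.tendsto_atTop]
  intro ε hε
  obtain ⟨k0, hk0⟩ := hsmall ε hε
  refine ⟨k0, fun k hk => ?_⟩
  rw [Real.dist_eq, sub_zero, abs_of_nonneg (hnn k)]
  exact lt_of_le_of_lt (hmono k0 k hk) hk0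

lemma fejer_step (hη : ∀ i, 0 < η i) (T : (Fin n → ℝ) → (Fin n → ℝ))
    (hT : ∀ a b, wNorm η (T a - T b) ≤ wNorm η (a - b))
    {lam : ℝ} (h0 : 0 < lam) (h1 : lam < 1)
    (x : ℕ → Fin n → ℝ) (hx : ∀ k, x (k+1) = (1-lam) • x k + lam • T (x k))
    {c : Fin n → ℝ} (hc : T c = c) (k : ℕ) :
    wNorm η (x (k+1) - c) ≤ wNorm η (x k - c) := by
  have hdec : x (k+1) - c = (1-lam) • (x k - c) + lam • (T (x k) - T c) := by
    rw [hx k, hc]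
    ext j
    simp only [Pi.add_apply, Pi.sub_apply, Pi.smul_apply, smul_eq_mul]
    ring
  calc wNorm η (x (k+1) - c)
      ≤ wNorm η ((1-lam) • (x k - c)) + wNorm η (lam • (T (x k) - T c)) := by
        rw [hdec]; exact wnorm_add_le hη _ _
  _ = (1-lam) * wNorm η (x k - c) + lam * wNorm η (T (x k) - T c) := by
        rw [wnorm_smul hη, wnorm_smul hη, abs_of_nonneg h0.le,
          abs_of_nonneg (by linarith : (0:ℝ) ≤ 1-lam)]
  _ ≤ (1-lam) * wNorm η (x k - c) + lam * wNorm η (x k - c) := by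
        have := hT (x k) c
        nlinarith
  _ = wNorm η (x k - c) := by ring

lemma ishikawa_tendsto (hη : ∀ i, 0 < η i) (T : (Fin n → ℝ) → (Fin n → ℝ))
    (hT : ∀ a b, wNorm η (T a - T b) ≤ wNorm η (a - b))
    {lam : ℝ} (h0 : 0 < lam) (h1 : lam < 1)
    (x : ℕ → Fin n → ℝ) (hx : ∀ k, x (k+1) = (1-lam) • x k + lam • T (x k))
    {z : Fin n → ℝ} (hz : T z = z) :
    Filter.Tendsto (fun k => wNorm η (T (x k) - x k)) Filter.atTop (nhds 0) := by
  obtain ⟨step, dec⟩ := ishikawa_basic hη T hT h0 h1 x hx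
  have main := ishikawa_ineq hη T hT h0 h1 x hx
  set D : ℕ → ℝ := fun k => wNorm η (T (x k) - x k) with hD
  have Dnn : ∀ k, 0 ≤ D k := fun k => wnorm_nonneg hη _
  have Dmono : ∀ j k, j ≤ k → D k ≤ D j := fun j k h => antitone_nat_of_succ_le dec h
  have h1l : (0:ℝ) < 1 - lam := by linarith
  set q : ℝ := (1-lam)⁻¹ with hq
  have hq0 : 0 < q := inv_pos.2 h1l
  -- Fejer gives boundedness
  have Rmono : ∀ j k, j ≤ k → wNorm η (x k - z) ≤ wNorm η (x j - z) := fun j k h =>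
    antitone_nat_of_succ_le (f := fun k => wNorm η (x k - z)) (fejer_step hη T hT h0 h1 x hx hz) h
  set M : ℝ := 2 * wNorm η (x 0 - z) with hM
  have boundA : ∀ i m : ℕ, wNorm η (T (x (i+m)) - x i) ≤ M := by
    intro i m
    calc wNorm η (T (x (i+m)) - x i)
        ≤ wNorm η (T (x (i+m)) - z) + wNorm η (z - x i) := wnorm_sub_le hη _ _ _
    _ = wNorm η (T (x (i+m)) - T z) + wNorm η (x i - z) := by
        rw [hz]
        congr 1
        rw [show z - x i = -(x i - z) by abel, wnorm_neg hη]
    _ ≤ wNorm η (x (i+m) - z) + wNorm η (x i - z) := by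
        have := hT (x (i+m)) z; linarith
    _ ≤ wNorm η (x 0 - z) + wNorm η (x 0 - z) := by
        have := Rmono 0 (i+m) (Nat.zero_le _)
        have := Rmono 0 i (Nat.zero_le _)
        linarith
    _ = M := by rw [hM]; ring
  refine antitone_to_zero Dnn Dmono fun ε hε => ?_
  by_contra hcon
  push_neg at hcon
  -- hcon : ∀ k, ε ≤ D k
  obtain ⟨m, hm⟩ := exists_nat_gt ((M/ε - 1)/lam)
  have hmlam : M < (1 + m*lam) * ε := by
    have h2 : (M/ε - 1) < m * lam := by
      rw [div_lt_iff₀ h0] at hm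
      linarith
    have h3 : M/ε < 1 + m*lam := by linarith
    calc M = (M/ε) * ε := by field_simp
    _ < (1 + m*lam) * ε := by exact mul_lt_mul_of_pos_right h3 hε
  set c0 : ℝ := ((1 + m*lam) * ε - M) * (1-lam)^m with hc0
  have hc0pos : 0 < c0 := by
    apply mul_pos (by linarith) (pow_pos h1l m)
  have hdrop : ∀ i, c0 ≤ D i - D (i+m) := by
    intro i
    have hmain := main m i
    have hbd := boundA i m
    have h4 : (1 + m*lam) * D i ≥ (1 + m*lam) * ε := by
      have : (0:ℝ) ≤ 1 + m*lam := by positivity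
      exact mul_le_mul_of_nonneg_left (hcon i) this
    have h5 : q^m * (D (i+m) - D i) ≤ M - (1 + m*lam) * ε := by linarith
    have h6 : (D (i+m) - D i) ≤ (M - (1 + m*lam) * ε) * (1-lam)^m := by
      have hqe : q^m * (1-lam)^m = 1 := by
        rw [hq, ← mul_pow, inv_mul_cancel₀ h1l.ne', one_pow]
      have := mul_le_mul_of_nonneg_right h5 (le_of_lt (pow_pos h1l m))
      calc D (i+m) - D i = (q^m * (D (i+m) - D i)) * (1-lam)^m := by
            rw [mul_comm (q^m), mul_assoc, hqe, mul_one]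
      _ ≤ (M - (1 + m*lam) * ε) * (1-lam)^m := this
    rw [hc0]
    nlinarith [pow_pos h1l m]
  have hiter : ∀ K : ℕ, D (K*m) ≤ D 0 - K * c0 := by
    intro K
    induction K with
    | zero => simp
    | succ K ih =>
      have := hdrop (K*m)
      have heq : K*m + m = (K+1)*m := by ring
      rw [heq] at this
      push_cast
      linarith
  obtain ⟨K, hK⟩ := exists_nat_gt (D 0 / c0)
  have := hiter K
  have hKc : D 0 < K * c0 := by
    rw [div_lt_iff₀ hc0pos] at hK
    linarith
  linarith [Dnn (K*m)]
end conv

/-- Forward step method: weakly monotone case. -/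
theorem stmt_8 {n : ℕ} (η : Fin n → ℝ) (hη : ∀ i, 0 < η i)
    (F : (Fin n → ℝ) → (Fin n → ℝ)) (hF : ContDiff ℝ 1 F)
    (L : ℝ) (hL : ∀ x y, wNorm η (F x - F y) ≤ L * wNorm η (x - y))
    (hmono : ∀ x, logNorm η (-(jac F x)) ≤ 0)
    (d : ℝ) (hd : 0 < d) (hdiag : ∀ x i, jac F x i i ≤ d)
    (hzero : ∃ z : Fin n → ℝ, F z = 0)
    (α : ℝ) (hα : α ∈ Set.Ioo (0 : ℝ) (1 / d))
    (x : ℕ → (Fin n → ℝ)) (hx : ∀ k, x (k + 1) = x k - α • F (x k)) :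
    ∃ xs : Fin n → ℝ, F xs = 0 ∧ Tendsto x atTop (nhds xs) := by
  obtain ⟨hα0, hα1⟩ := hα
  set lam : ℝ := α * d with hlam
  have h0 : 0 < lam := mul_pos hα0 hd
  have h1 : lam < 1 := by
    rw [hlam]
    calc α * d < (1/d) * d := by exact mul_lt_mul_of_pos_right hα1 hd
    _ = 1 := by field_simp
  set T : (Fin n → ℝ) → (Fin n → ℝ) := fun u => u - d⁻¹ • F u with hTdef
  have hT : ∀ a b, wNorm η (T a - T b) ≤ wNorm η (a - b) := fun a b =>
    H_nonexp hη hF hmono hd hdiag a b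
  have hx' : ∀ k, x (k+1) = (1-lam) • x k + lam • T (x k) := by
    intro k
    rw [hx k]
    ext j
    simp only [hTdef, hlam, Pi.add_apply, Pi.sub_apply, Pi.smul_apply, smul_eq_mul]
    field_simp
    ring
  obtain ⟨z, hz⟩ := hzero
  have hTz : T z = z := by
    rw [hTdef]; simp [hz]
  -- asymptotic regularity : wNorm (F (x k)) → 0
  have hDt := ishikawa_tendsto hη T hT h0 h1 x hx' hTz
  have hTx : ∀ k, T (x k) - x k = (-d⁻¹) • F (x k) := by
    intro k; rw [hTdef]; ext j; simp
  have hFt : Tendsto (fun k => wNorm η (F (x k))) atTop (nhds 0) := by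
    have heq : ∀ k, wNorm η (F (x k)) = d * wNorm η (T (x k) - x k) := by
      intro k
      rw [hTx k, wnorm_smul hη, abs_neg, abs_inv, abs_of_pos hd]
      field_simp
    simp_rw [heq]
    simpa using hDt.const_mul d
  -- coordinates of F(x k) tend to 0, so F (x k) → 0
  have hFcoord : Tendsto (fun k => F (x k)) atTop (nhds 0) := by
    rw [tendsto_pi_nhds]
    intro i
    have hb : ∀ k, ‖F (x k) i‖ ≤ η i * wNorm η (F (x k)) := fun k =>
      abs_le_wnorm hη (F (x k)) i
    have hgt : Tendsto (fun k => η i * wNorm η (F (x k))) atTop (nhds 0) := by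
      simpa using hFt.const_mul (η i)
    simpa using squeeze_zero_norm hb hgt
  -- boundedness and compactness
  set R0 : ℝ := wNorm η (x 0 - z) with hR0
  have hR0nn : 0 ≤ R0 := wnorm_nonneg hη _
  have Rmono : ∀ k, wNorm η (x k - z) ≤ R0 := fun k =>
    antitone_nat_of_succ_le (f := fun k => wNorm η (x k - z))
      (fejer_step hη T hT h0 h1 x hx' hTz) (Nat.zero_le k)
  set S : ℝ := ∑ j, η j with hS
  have hSnn : ∀ j, η j ≤ S := fun j =>
    Finset.single_le_sum (fun i _ => (hη i).le) (Finset.mem_univ j)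
  have hball : ∀ k, x k ∈ Metric.closedBall z (S * R0) := by
    intro k
    rw [Metric.mem_closedBall, dist_eq_norm]
    have hS0 : 0 ≤ S := Finset.sum_nonneg fun j _ => (hη j).le
    rw [pi_norm_le_iff_of_nonneg (mul_nonneg hS0 hR0nn)]
    intro j
    calc ‖(x k - z) j‖ ≤ η j * wNorm η (x k - z) := abs_le_wnorm hη _ j
    _ ≤ S * R0 := by
        have h1 := Rmono k
        have h2 := hSnn j
        have h3 := wnorm_nonneg hη (x k - z)
        nlinarith [(hη j).le]
  obtain ⟨c, -, φ, hφ, hsub⟩ := (isCompact_closedBall z (S*R0)).tendsto_subseq hball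
  have hFc : F c = 0 := by
    have h1 : Tendsto (fun j => F (x (φ j))) atTop (nhds (F c)) :=
      (hF.continuous.tendsto c).comp hsub
    have h2 : Tendsto (fun j => F (x (φ j))) atTop (nhds 0) :=
      hFcoord.comp hφ.tendsto_atTop
    exact tendsto_nhds_unique h1 h2
  have hTc : T c = c := by rw [hTdef]; simp [hFc]
  refine ⟨c, hFc, ?_⟩
  set ρ : ℕ → ℝ := fun k => wNorm η (x k - c) with hρ
  have ρnn : ∀ k, 0 ≤ ρ k := fun k => wnorm_nonneg hη _
  have ρmono : ∀ j k, j ≤ k → ρ k ≤ ρ j := fun j k h =>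
    antitone_nat_of_succ_le (f := ρ) (fejer_step hη T hT h0 h1 x hx' hTc) h
  have hb : ∀ k, ρ k ≤ ∑ i, |x k i - c i| / η i := by
    intro k
    have hnn : (0:ℝ) ≤ ∑ i, |x k i - c i| / η i :=
      Finset.sum_nonneg fun i _ => div_nonneg (abs_nonneg _) (hη i).le
    refine Real.iSup_le (fun i => ?_) hnn
    have : |(x k - c) i| / η i = |x k i - c i| / η i := by simp
    rw [this]
    exact Finset.single_le_sum (f := fun i => |x k i - c i| / η i)
      (fun i _ => div_nonneg (abs_nonneg _) (hη i).le) (Finset.mem_univ i)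
  have ρsub : Tendsto (fun j => ρ (φ j)) atTop (nhds 0) := by
    have hsum : Tendsto (fun j => ∑ i, |x (φ j) i - c i| / η i) atTop (nhds 0) := by
      have hterm : ∀ i : Fin n, Tendsto (fun j => |x (φ j) i - c i| / η i) atTop (nhds 0) := by
        intro i
        have hcoord : Tendsto (fun j => x (φ j) i) atTop (nhds (c i)) :=
          tendsto_pi_nhds.1 hsub i
        have hsub0 : Tendsto (fun j => x (φ j) i - c i) atTop (nhds 0) := by
          simpa using hcoord.sub_const (c i)
        have habs : Tendsto (fun j => |x (φ j) i - c i|) atTop (nhds 0) := by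
          simpa using hsub0.abs
        simpa using habs.div_const (η i)
      have := tendsto_finset_sum (Finset.univ : Finset (Fin n)) (fun i _ => hterm i)
      simpa using this
    exact squeeze_zero (fun j => ρnn _) (fun j => hb _) hsum
  have ρt : Tendsto ρ atTop (nhds 0) := by
    refine antitone_to_zero ρnn ρmono fun ε hε => ?_
    obtain ⟨j, hj⟩ := (ρsub.eventually (gt_mem_nhds hε)).exists
    exact ⟨φ j, hj⟩
  rw [tendsto_pi_nhds]
  intro i
  have hb2 : ∀ k, ‖x k i - c i‖ ≤ η i * ρ k := by
    intro k
    have := abs_le_wnorm hη (x k - c) i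
    simpa using this
  have hdiff : Tendsto (fun k => x k i - c i) atTop (nhds 0) :=
    squeeze_zero_norm hb2 (by simpa using ρt.const_mul (η i))
  have := hdiff.add_const (c i)
  simpa using this
end
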